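/- arXiv:1711.04692 — 5 statements merged into one kernel-verified Lean document; each statement's English description precedes it below -/
import Mathlib

section
/- Let d ≥ 1 be an integer, U an open subset of ℝ^d, and L_1, …, L_r linear partial differential operators on U with continuous coefficients. Then the following are equivalent: (1) for every infinitely differentiable real function φ on U with compact support, the functions L_1φ, …, L_rφ are linearly dependent in the real vector space C(U) of continuous real functions on U; (2) L_1, …, L_r are linearly dependent, i.e. there exist real numbers c_1, …, c_r, not all zero, such that c_1L_1 + ⋯ + c_rL_r is the zero operator. -/
open scoped ContDiff Topology


/-- The partial derivative of `f : ℝ^d → ℝ` in the `i`-th coordinate direction. -/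
noncomputable def pderivFun {d : ℕ} (i : Fin d) (f : (Fin d → ℝ) → ℝ) :
    (Fin d → ℝ) → ℝ :=
  fun x => fderiv ℝ f x (Pi.single i 1)

/-- The iterated partial derivative `D^α f = ∂^|α| f / (∂x_1)^{α_1} ⋯ (∂x_d)^{α_d}`. -/
noncomputable def Dmulti {d : ℕ} (α : Fin d → ℕ) (f : (Fin d → ℝ) → ℝ) :
    (Fin d → ℝ) → ℝ :=
  (List.finRange d).foldr (fun i g => (pderivFun i)^[α i] g) f

/-- The action of the linear partial differential operator
`L = ∑_{α, |α| ≤ s} a_α D^α` (with coefficient family `a`) on a function `φ`. -/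
noncomputable def pdoApply {d : ℕ} (s : ℕ) (a : (Fin d → ℕ) → (Fin d → ℝ) → ℝ)
    (φ : (Fin d → ℝ) → ℝ) : (Fin d → ℝ) → ℝ :=
  fun x => ∑ α ∈ Fintype.piFinset (fun _ : Fin d => Finset.range (s + 1)),
    a α x * Dmulti α φ x

/-- separated product -/
noncomputable def sepProd {d : ℕ} (F : Fin d → ℝ → ℝ) : (Fin d → ℝ) → ℝ :=
  fun x => ∏ j, F j (x j)

theorem sepProd_contDiff {d : ℕ} {F : Fin d → ℝ → ℝ} (hF : ∀ j, ContDiff ℝ ∞ (F j)) :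
    ContDiff ℝ ∞ (sepProd F) := by
  exact contDiff_prod (fun j _ => (hF j).comp (contDiff_pi.mp contDiff_id j))

theorem sepProd_hasFDerivAt {d : ℕ} {F : Fin d → ℝ → ℝ} (hF : ∀ j, ContDiff ℝ ∞ (F j))
    (x : Fin d → ℝ) :
    HasFDerivAt (sepProd F)
      (∑ j, (∏ l ∈ Finset.univ.erase j, F l (x l)) •
        (((1 : ℝ →L[ℝ] ℝ).smulRight (deriv (F j) (x j))).comp
          (ContinuousLinearMap.proj j))) x := by
  have hg : ∀ j : Fin d, HasFDerivAt (fun y : Fin d → ℝ => F j (y j))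
      (((1 : ℝ →L[ℝ] ℝ).smulRight (deriv (F j) (x j))).comp (ContinuousLinearMap.proj j)) x :=
    fun j => by
    have h2 := hasFDerivAt_apply (𝕜 := ℝ) j x
    have h1 := (((hF j).differentiable (by simp)) (x j)).hasDerivAt.hasFDerivAt
    exact h1.comp x h2
  exact HasFDerivAt.finset_prod (u := Finset.univ) (fun j _ => hg j)

theorem pderivFun_sepProd {d : ℕ} {F : Fin d → ℝ → ℝ} (hF : ∀ j, ContDiff ℝ ∞ (F j))
    (i : Fin d) :
    pderivFun i (sepProd F) = sepProd (Function.update F i (deriv (F i))) := by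
  funext x
  have hupd : sepProd (Function.update F i (deriv (F i))) x
      = deriv (F i) (x i) * ∏ j ∈ Finset.univ.erase i, F j (x j) := by
    rw [sepProd, ← Finset.mul_prod_erase Finset.univ _ (Finset.mem_univ i)]
    congr 1
    · simp
    · exact Finset.prod_congr rfl fun j hj => by
        rw [Function.update_of_ne (Finset.ne_of_mem_erase hj)]
  rw [pderivFun, (sepProd_hasFDerivAt hF x).fderiv]
  rw [ContinuousLinearMap.sum_apply]
  rw [Finset.sum_eq_single i]
  · rw [hupd]
    simp [mul_comm]
  · intro j _ hj
    simp [Pi.single_eq_of_ne' hj.symm]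
  · simp

theorem iterate_pderivFun_sepProd {d : ℕ} {F : Fin d → ℝ → ℝ}
    (hF : ∀ j, ContDiff ℝ ∞ (F j)) (i : Fin d) (n : ℕ) :
    (pderivFun i)^[n] (sepProd F) = sepProd (Function.update F i (deriv^[n] (F i))) := by
  induction n generalizing F with
  | zero => simp [Function.update_eq_self]
  | succ n ih =>
      have hF2 : ∀ j, ContDiff ℝ ∞ (Function.update F i (deriv (F i)) j) := by
        intro j
        by_cases h : j = i
        · subst h; rw [Function.update_self]
          exact (contDiff_infty_iff_deriv.mp (hF j)).2
        · rw [Function.update_of_ne h]; exact hF j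
      rw [Function.iterate_succ_apply, pderivFun_sepProd hF i, ih hF2]
      rw [Function.update_idem, Function.update_self, ← Function.iterate_succ_apply,
        Function.iterate_succ_apply']

theorem Dmulti_sepProd {d : ℕ} {F : Fin d → ℝ → ℝ}
    (hF : ∀ j, ContDiff ℝ ∞ (F j)) (α : Fin d → ℕ) :
    Dmulti α (sepProd F) = sepProd (fun j => deriv^[α j] (F j)) := by
  rw [Dmulti]
  have key : ∀ l : List (Fin d), l.Nodup → ∀ F : Fin d → ℝ → ℝ, (∀ j, ContDiff ℝ ∞ (F j)) →
      List.foldr (fun i g => (pderivFun i)^[α i] g) (sepProd F) l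
        = sepProd (fun j => if j ∈ l then deriv^[α j] (F j) else F j) := by
    intro l
    induction l with
    | nil => intro _ F hF; simp [sepProd]
    | cons i l ih =>
        intro hnd F hF
        have hil : i ∉ l := (List.nodup_cons.mp hnd).1
        rw [List.foldr_cons, ih (List.nodup_cons.mp hnd).2 F hF]
        set F' := fun j => if j ∈ l then deriv^[α j] (F j) else F j with hF'
        have hF'c : ∀ j, ContDiff ℝ ∞ (F' j) := by
          intro j
          by_cases h : j ∈ l
          · simp only [hF', if_pos h]; exact (hF j).iterate_deriv _
          · simp only [hF', if_neg h]; exact hF j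
        rw [iterate_pderivFun_sepProd hF'c i]
        have hupd : Function.update F' i (deriv^[α i] (F' i))
            = fun j => if j ∈ i :: l then deriv^[α j] (F j) else F j := by
          funext j
          by_cases h : j = i
          · subst h
            rw [Function.update_self]
            simp [hF', hil]
          · rw [Function.update_of_ne h]
            simp only [hF', List.mem_cons]
            by_cases h2 : j ∈ l <;> simp [h2, h]
        rw [hupd]
  rw [key (List.finRange d) (List.nodup_finRange d) F hF]
  simp [List.mem_finRange]

theorem pderivFun_eqOn {d : ℕ} {f g : (Fin d → ℝ) → ℝ} {V : Set (Fin d → ℝ)}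
    (hV : IsOpen V) (i : Fin d) (h : Set.EqOn f g V) :
    Set.EqOn (pderivFun i f) (pderivFun i g) V := by
  intro x hx
  have he : f =ᶠ[nhds x] g := Filter.eventuallyEq_of_mem (hV.mem_nhds hx) h
  simp only [pderivFun, he.fderiv_eq]

theorem iterate_pderivFun_eqOn {d : ℕ} {f g : (Fin d → ℝ) → ℝ} {V : Set (Fin d → ℝ)}
    (hV : IsOpen V) (i : Fin d) (n : ℕ) (h : Set.EqOn f g V) :
    Set.EqOn ((pderivFun i)^[n] f) ((pderivFun i)^[n] g) V := by
  induction n generalizing f g with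
  | zero => exact h
  | succ n ih => 
      rw [Function.iterate_succ_apply, Function.iterate_succ_apply]
      exact ih (pderivFun_eqOn hV i h)

theorem Dmulti_eqOn {d : ℕ} (α : Fin d → ℕ) {f g : (Fin d → ℝ) → ℝ} {V : Set (Fin d → ℝ)}
    (hV : IsOpen V) (h : Set.EqOn f g V) :
    Set.EqOn (Dmulti α f) (Dmulti α g) V := by
  rw [Dmulti, Dmulti]
  induction (List.finRange d) generalizing f g with
  | nil => exact h
  | cons i l ih =>
      rw [List.foldr_cons, List.foldr_cons]
      exact iterate_pderivFun_eqOn hV i (α i) (ih h)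

theorem iterate_deriv_monomial (c : ℝ) (m n : ℕ) :
    deriv^[n] (fun t => (t - c) ^ m)
      = fun t => (m.descFactorial n : ℝ) * (t - c) ^ (m - n) := by
  induction n with
  | zero => simp
  | succ n ih =>
      rw [Function.iterate_succ_apply', ih]
      funext t
      have H : HasDerivAt (fun t : ℝ => (t - c) ^ (m - n))
          ((↑(m - n) * (t - c) ^ (m - n - 1)) * 1) t :=
        ((hasDerivAt_id t).sub_const c).pow _
      rw [(H.const_mul ((m.descFactorial n : ℝ))).deriv]
      have : m - (n + 1) = m - n - 1 := by omega
      rw [this, Nat.descFactorial_succ]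
      push_cast
      ring

theorem iterate_deriv_monomial_self (c : ℝ) (m n : ℕ) :
    deriv^[n] (fun t => (t - c) ^ m) c = if n = m then (m.factorial : ℝ) else 0 := by
  rw [iterate_deriv_monomial]
  rcases lt_trichotomy n m with h | h | h
  · simp only [if_neg h.ne]
    rw [show ((c:ℝ) - c) = 0 from sub_self c, zero_pow (by omega : m - n ≠ 0), mul_zero]
  · subst h
    simp [Nat.descFactorial_self]
  · simp [if_neg h.ne', Nat.descFactorial_eq_zero_iff_lt.mpr h]

theorem contDiff_monomial (c : ℝ) (m : ℕ) : ContDiff ℝ ∞ (fun t : ℝ => (t - c) ^ m) :=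
  (contDiff_id.sub contDiff_const).pow m

theorem exists_injective_mem {X : Type*} : ∀ {r : ℕ} (O : Fin r → Set X),
    (∀ k, (O k).Infinite) → ∃ y : Fin r → X, Function.Injective y ∧ ∀ k, y k ∈ O k := by
  intro r
  induction r with
  | zero => exact fun O _ => ⟨Fin.elim0, fun x => x.elim0, fun k => k.elim0⟩
  | succ n ih =>
      intro O hO
      obtain ⟨y', hy'inj, hy'mem⟩ := ih (fun k => O k.succ) (fun k => hO k.succ)
      have : ((O 0) \ (Set.range y')).Infinite := (hO 0).diff (Set.finite_range y')
      obtain ⟨y0, hy0⟩ := this.nonempty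
      refine ⟨Fin.cons y0 y', ?_, ?_⟩
      · intro k l hkl
        induction k using Fin.cases with
        | zero =>
            induction l using Fin.cases with
            | zero => rfl
            | succ l =>
                rw [Fin.cons_zero, Fin.cons_succ] at hkl
                exact absurd ⟨l, hkl.symm⟩ hy0.2
        | succ k =>
            induction l using Fin.cases with
            | zero =>
                rw [Fin.cons_zero, Fin.cons_succ] at hkl
                exact absurd ⟨k, hkl⟩ hy0.2
            | succ l =>
                rw [Fin.cons_succ, Fin.cons_succ] at hkl
                exact congrArg Fin.succ (hy'inj hkl)
      · intro k
        induction k using Fin.cases with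
        | zero => exact hy0.1
        | succ k => exact hy'mem k

theorem exists_eval_points {r : ℕ} {S : Type*} (w : S → Fin r → ℝ)
    (hspan : ∀ c : Fin r → ℝ, (∀ p, ∑ i, c i * w p i = 0) → c = 0) :
    ∃ p : Fin r → S, LinearIndependent ℝ (fun k => w (p k)) := by
  have htop : Submodule.span ℝ (Set.range w) = ⊤ := by
    by_contra hne
    obtain ⟨f, hf0, hfmap⟩ := Submodule.exists_dual_map_eq_bot_of_lt_top
      (lt_top_iff_ne_top.mpr hne) inferInstance
    have hfv : ∀ v ∈ Submodule.span ℝ (Set.range w), f v = 0 := by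
      intro v hv
      have : f v ∈ Submodule.map f (Submodule.span ℝ (Set.range w)) :=
        Submodule.mem_map_of_mem hv
      rw [hfmap] at this
      simpa using this
    have hc : (fun i => f (fun j => if i = j then (1:ℝ) else 0)) = 0 := by
      apply hspan
      intro p
      have h1 : f (w p) = 0 := hfv _ (Submodule.subset_span ⟨p, rfl⟩)
      calc ∑ i, f (fun j => if i = j then (1:ℝ) else 0) * w p i
          = f (∑ i, w p i • (fun j => if i = j then (1:ℝ) else 0)) := by
            rw [map_sum]
            exact Finset.sum_congr rfl fun i _ => by rw [map_smul, smul_eq_mul, mul_comm]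
        _ = f (w p) := by rw [← pi_eq_sum_univ (w p)]
        _ = 0 := h1
    apply hf0
    apply LinearMap.ext
    intro v
    have hzi : ∀ i, f (fun j => if i = j then (1:ℝ) else 0) = 0 := fun i => congrFun hc i
    rw [pi_eq_sum_univ v, map_sum, LinearMap.zero_apply]
    exact Finset.sum_eq_zero fun i _ => by rw [map_smul, hzi i, smul_zero]
  obtain ⟨b, hbsub, hbspan, hbind⟩ := exists_linearIndependent ℝ (Set.range w)
  have hbtop : Submodule.span ℝ b = ⊤ := hbspan.trans htop
  let B : Module.Basis b ℝ (Fin r → ℝ) := Module.Basis.mk hbind (by rw [Subtype.range_coe, hbtop])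
  haveI : Fintype b := FiniteDimensional.fintypeBasisIndex B
  have hcard : Fintype.card b = r := by
    have h1 := Module.finrank_eq_card_basis B
    rw [Module.finrank_fin_fun] at h1
    omega
  let e : Fin r ≃ b := (Fintype.equivFinOfCardEq hcard).symm
  have hind : LinearIndependent ℝ (fun k : Fin r => ((e k : b) : Fin r → ℝ)) :=
    hbind.comp e e.injective
  choose p hp using fun k => hbsub (e k).2
  refine ⟨p, ?_⟩
  have heq : (fun k => w (p k)) = fun k => ((e k : b) : Fin r → ℝ) := funext hp
  rw [heq]
  exact hind

/-- **Theorem 1 (smooth compactly supported test functions).**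
Linear partial differential operators `L_1, …, L_r` with continuous coefficients on an
open set `U ⊆ ℝ^d` are locally linearly dependent (i.e. `L_1 φ, …, L_r φ` are linearly
dependent in `C(U)` for every `φ ∈ C_c^∞(U)`) iff they are linearly dependent. -/
theorem local_linear_dependence_of_pdos
    (d : ℕ) (hd : 1 ≤ d) (U : Set (Fin d → ℝ)) (hU : IsOpen U)
    (r s : ℕ)
    (a : Fin r → (Fin d → ℕ) → (Fin d → ℝ) → ℝ)
    (hcont : ∀ i α, ContinuousOn (a i α) U)
    (hdeg : ∀ i α, s < ∑ j, α j → a i α = 0) :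
    (∀ φ : (Fin d → ℝ) → ℝ, ContDiff ℝ (⊤ : ℕ∞) φ → HasCompactSupport φ →
        tsupport φ ⊆ U →
        ¬ LinearIndependent ℝ (fun i : Fin r => fun x : U => pdoApply s (a i) φ x)) ↔
      ∃ c : Fin r → ℝ, c ≠ 0 ∧ ∀ α : Fin d → ℕ, ∀ x ∈ U, ∑ i, c i * a i α x = 0 := by
  constructor
  · intro H
    by_contra hc2
    push_neg at hc2
    -- the evaluation vectors span
    set A := Fintype.piFinset (fun _ : Fin d => Finset.range (s + 1)) with hA
    have hspan : ∀ c : Fin r → ℝ,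
        (∀ p : (Fin d → ℕ) × U, ∑ i, c i * a i p.1 p.2 = 0) → c = 0 := by
      intro c hc
      by_contra hcne
      obtain ⟨α, x, hxU, hsum⟩ := hc2 c hcne
      exact hsum (hc (α, ⟨x, hxU⟩))
    obtain ⟨p, hind⟩ := exists_eval_points (fun p : (Fin d → ℕ) × U => fun i => a i p.1 p.2) hspan
    set αk : Fin r → (Fin d → ℕ) := fun k => (p k).1 with hαk
    set xk : Fin r → (Fin d → ℝ) := fun k => ((p k).2 : Fin d → ℝ) with hxk
    have hxkU : ∀ k, xk k ∈ U := fun k => (p k).2.2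
    have hAk : ∀ k, αk k ∈ A := by
      intro k
      by_contra hmem
      have hz : ∀ i, a i (αk k) = 0 := by
        intro i
        apply hdeg
        rw [hA, Fintype.mem_piFinset] at hmem
        push_neg at hmem
        obtain ⟨j, hj⟩ := hmem
        rw [Finset.mem_range] at hj
        push_neg at hj
        calc s < αk k j := by omega
          _ ≤ ∑ j', αk k j' := Finset.single_le_sum (fun _ _ => Nat.zero_le _) (Finset.mem_univ j)
      have := hind.ne_zero k
      apply this
      funext i
      rw [hz i]
      rfl
    classical
    -- determinant nonzero at the points xk
    have hM0 : IsUnit (Matrix.of (fun i k => a i (αk k) (xk k))) := by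
      rw [← Matrix.linearIndependent_cols_iff_isUnit]
      exact hind
    have hdet0 : (Matrix.of (fun i k => a i (αk k) (xk k))).det ≠ 0 :=
      IsUnit.ne_zero (Matrix.isUnit_iff_isUnit_det _ |>.mp hM0)
    set T : Set (Fin r → Fin d → ℝ) := {y | ∀ k, y k ∈ U} with hT
    have hFcont : ContinuousOn (fun y : Fin r → Fin d → ℝ =>
        (Matrix.of (fun i k => a i (αk k) (y k))).det) T := by
      apply Continuous.comp_continuousOn (Continuous.matrix_det continuous_id)
      apply continuousOn_pi.mpr
      intro i
      apply continuousOn_pi.mpr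
      intro k
      exact (hcont i (αk k)).comp (continuous_apply k).continuousOn (fun y hy => hy k)
    have hxkT : xk ∈ T := fun k => hxkU k
    have hnhds : {y : Fin r → Fin d → ℝ |
        (Matrix.of (fun i k => a i (αk k) (y k))).det ≠ 0} ∈ nhdsWithin xk T :=
      (hFcont xk hxkT) (isOpen_compl_singleton.mem_nhds hdet0)
    obtain ⟨ε, hε, hεsub⟩ := Metric.mem_nhdsWithin_iff.mp hnhds
    haveI : Nontrivial (Fin d → ℝ) := by
      refine ⟨0, Pi.single ⟨0, hd⟩ 1, fun h => ?_⟩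
      have := congrFun h ⟨0, hd⟩
      rw [Pi.single_eq_same] at this
      simp at this
    have hOinf : ∀ k, (Metric.ball (xk k) ε ∩ U).Infinite := by
      intro k
      haveI := Module.punctured_nhds_neBot ℝ (Fin d → ℝ) (xk k)
      exact infinite_of_mem_nhds (xk k)
        (Filter.inter_mem (Metric.ball_mem_nhds _ hε) (hU.mem_nhds (hxkU k)))
    obtain ⟨y, hyinj, hymem⟩ := exists_injective_mem _ hOinf
    have hyU : ∀ k, y k ∈ U := fun k => (hymem k).2
    have hydet : (Matrix.of (fun i k => a i (αk k) (y k))).det ≠ 0 := by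
      apply hεsub
      refine ⟨?_, fun k => hyU k⟩
      rw [Metric.mem_ball, dist_pi_lt_iff hε]
      exact fun k => Metric.mem_ball.mp (hymem k).1
    -- radii
    have hδU : ∀ k, ∃ δ > 0, Metric.closedBall (y k) δ ⊆ U := by
      intro k
      obtain ⟨δ, hδ, hball⟩ := Metric.isOpen_iff.mp hU (y k) (hyU k)
      exact ⟨δ/2, by positivity, (Metric.closedBall_subset_ball (by linarith)).trans hball⟩
    choose δU hδUpos hδUsub using hδU
    set D : Fin r → Finset ℝ := fun k =>
      insert (δU k) ((Finset.univ.erase k).image (fun j => dist (y j) (y k))) with hD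
    have hDne : ∀ k, (D k).Nonempty := fun k => ⟨δU k, Finset.mem_insert_self _ _⟩
    set δ : Fin r → ℝ := fun k => (D k).min' (hDne k) / 2 with hδdef
    have hDpos : ∀ k, ∀ z ∈ D k, 0 < z := by
      intro k z hz
      rw [hD, Finset.mem_insert] at hz
      rcases hz with h | h
      · rw [h]; exact hδUpos k
      · obtain ⟨j, hj, hjz⟩ := Finset.mem_image.mp h
        rw [← hjz]
        exact dist_pos.mpr (fun hcon => (Finset.mem_erase.mp hj).1 (hyinj hcon))
    have hδpos : ∀ k, 0 < δ k := fun k =>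
      div_pos (hDpos k _ ((D k).min'_mem (hDne k))) two_pos
    have hδltU : ∀ k, δ k ≤ δU k := by
      intro k
      have := Finset.min'_le (D k) (δU k) (Finset.mem_insert_self _ _)
      rw [hδdef]
      linarith [hδUpos k]
    have hδsub : ∀ k, Metric.closedBall (y k) (δ k) ⊆ U :=
      fun k => (Metric.closedBall_subset_closedBall (hδltU k)).trans (hδUsub k)
    have hsep : ∀ j k, j ≠ k → y k ∉ Metric.closedBall (y j) (δ j) := by
      intro j k hjk
      have hmem : dist (y k) (y j) ∈ D j := by
        rw [hD, Finset.mem_insert]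
        right
        exact Finset.mem_image.mpr ⟨k, Finset.mem_erase.mpr ⟨Ne.symm hjk, Finset.mem_univ k⟩, rfl⟩
      have h1 := Finset.min'_le (D j) _ hmem
      have h2 : 0 < dist (y k) (y j) := dist_pos.mpr (fun hcon => hjk (hyinj hcon).symm)
      rw [Metric.mem_closedBall]
      rw [hδdef]
      push_neg
      linarith
    -- bump functions and test function
    set χ : ∀ k, ContDiffBump (y k) :=
      fun k => ⟨δ k / 2, δ k, by linarith [hδpos k], by linarith [hδpos k]⟩ with hχ
    set mono : Fin r → (Fin d → ℝ) → ℝ :=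
      fun k => sepProd (fun j t => (t - y k j) ^ (αk k j)) with hmono
    set φ : (Fin d → ℝ) → ℝ := fun x => ∑ k, (χ k) x * mono k x with hφdef
    have hφsmooth : ContDiff ℝ ∞ φ :=
      ContDiff.sum fun k _ => ((χ k).contDiff).mul
        (sepProd_contDiff fun j => contDiff_monomial _ _)
    have hK : IsCompact (⋃ k, Metric.closedBall (y k) (δ k)) :=
      isCompact_iUnion fun k => isCompact_closedBall _ _
    have hsupp : Function.support φ ⊆ ⋃ k, Metric.closedBall (y k) (δ k) := by
      intro x hx
      rw [Function.mem_support] at hx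
      obtain ⟨k, -, hk⟩ := Finset.exists_ne_zero_of_sum_ne_zero hx
      have hχne : (χ k) x ≠ 0 := fun h => hk (by rw [h, zero_mul])
      have hxball : x ∈ Metric.ball (y k) (δ k) := by
        have := Function.mem_support.mpr hχne
        rwa [(χ k).support_eq] at this
      exact Set.mem_iUnion.mpr ⟨k, Metric.ball_subset_closedBall hxball⟩
    have htsup : tsupport φ ⊆ ⋃ k, Metric.closedBall (y k) (δ k) :=
      closure_minimal hsupp (isClosed_iUnion_of_finite fun k => Metric.isClosed_closedBall)
    have hφcompact : HasCompactSupport φ :=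
      hK.of_isClosed_subset (isClosed_tsupport φ) htsup
    have hφsub : tsupport φ ⊆ U :=
      htsup.trans (Set.iUnion_subset fun k => hδsub k)
    -- local equality with the monomial
    set V : Fin r → Set (Fin d → ℝ) := fun k => Metric.ball (y k) (δ k / 2) ∩
      ⋂ j ∈ Finset.univ.erase k, (Metric.closedBall (y j) (δ j))ᶜ with hV
    have hVopen : ∀ k, IsOpen (V k) := fun k =>
      IsOpen.inter Metric.isOpen_ball
        (isOpen_biInter_finset fun j _ => Metric.isClosed_closedBall.isOpen_compl)
    have hymemV : ∀ k, y k ∈ V k := by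
      intro k
      refine ⟨Metric.mem_ball_self (by linarith [hδpos k]), ?_⟩
      apply Set.mem_iInter₂.mpr
      intro j hj
      exact hsep j k (Finset.mem_erase.mp hj).1
    have hEq : ∀ k, Set.EqOn φ (mono k) (V k) := by
      intro k x hx
      obtain ⟨hx1, hx2⟩ := hx
      have h1 : (χ k) x = 1 :=
        (χ k).one_of_mem_closedBall (Metric.ball_subset_closedBall hx1)
      have h0 : ∀ j, j ≠ k → (χ j) x = 0 := by
        intro j hj
        have hnb : x ∉ Metric.ball (y j) (δ j) := by
          have := Set.mem_iInter₂.mp hx2 j (Finset.mem_erase.mpr ⟨hj, Finset.mem_univ j⟩)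
          exact fun hmem => this (Metric.ball_subset_closedBall hmem)
        by_contra hne
        exact hnb (by rw [← (χ j).support_eq]; exact Function.mem_support.mpr hne)
      show (∑ j, (χ j) x * mono j x) = mono k x
      rw [Finset.sum_eq_single k]
      · rw [h1, one_mul]
      · intro j _ hjk
        rw [h0 j hjk, zero_mul]
      · intro h; exact absurd (Finset.mem_univ k) h
    have hDval : ∀ k (α : Fin d → ℕ), Dmulti α φ (y k)
        = if α = αk k then ∏ j, ((αk k j).factorial : ℝ) else 0 := by
      intro k α
      have h1 : Dmulti α φ (y k) = Dmulti α (mono k) (y k) :=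
        Dmulti_eqOn α (hVopen k) (hEq k) (hymemV k)
      rw [h1, hmono, Dmulti_sepProd (fun j => contDiff_monomial _ _) α, sepProd]
      by_cases h : α = αk k
      · rw [if_pos h, h]
        exact Finset.prod_congr rfl fun j _ => by
          rw [iterate_deriv_monomial_self, if_pos rfl]
      · rw [if_neg h]
        have hex : ∃ j, α j ≠ αk k j := by
          by_contra hcon; push_neg at hcon; exact h (funext hcon)
        obtain ⟨j, hj⟩ := hex
        exact Finset.prod_eq_zero (Finset.mem_univ j) (by
          rw [iterate_deriv_monomial_self, if_neg hj])
    have hpdo : ∀ (i : Fin r) k, pdoApply s (a i) φ (y k)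
        = a i (αk k) (y k) * ∏ j, ((αk k j).factorial : ℝ) := by
      intro i k
      simp only [pdoApply]
      rw [← hA, Finset.sum_eq_single (αk k)]
      · rw [hDval k (αk k), if_pos rfl]
      · intro α hαA hαne
        rw [hDval k α, if_neg hαne, mul_zero]
      · intro h; exact absurd (hAk k) h
    obtain ⟨g, hgsum, i0, hgi0⟩ :=
      Fintype.not_linearIndependent_iff.mp (H φ hφsmooth hφcompact hφsub)
    have hgk : ∀ k, ∑ i, g i * a i (αk k) (y k) = 0 := by
      intro k
      have hev := congrFun hgsum ⟨y k, hyU k⟩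
      rw [Finset.sum_apply] at hev
      simp only [Pi.smul_apply, smul_eq_mul, Pi.zero_apply] at hev
      rw [Finset.sum_congr rfl (fun i _ => by rw [hpdo i k])] at hev
      have hfac : (0:ℝ) < ∏ j, ((αk k j).factorial : ℝ) :=
        Finset.prod_pos fun j _ => by exact_mod_cast (αk k j).factorial_pos
      have h2 : (∑ i, g i * a i (αk k) (y k)) * (∏ j, ((αk k j).factorial : ℝ)) = 0 := by
        rw [Finset.sum_mul]
        rw [← hev]
        exact Finset.sum_congr rfl fun i _ => by ring
      exact (mul_eq_zero.mp h2).resolve_right (ne_of_gt hfac)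
    have hvm : Matrix.vecMul g (Matrix.of (fun i k => a i (αk k) (y k))) = 0 := by
      funext k
      rw [Matrix.vecMul, Pi.zero_apply]
      exact hgk k
    have hunit : IsUnit (Matrix.of (fun i k => a i (αk k) (y k))).det :=
      isUnit_iff_ne_zero.mpr hydet
    have hg0 : g = 0 := by
      set My := Matrix.of (fun i k => a i (αk k) (y k)) with hMy
      calc g = Matrix.vecMul g (My * My⁻¹) := by
              rw [Matrix.mul_nonsing_inv _ hunit, Matrix.vecMul_one]
        _ = Matrix.vecMul (Matrix.vecMul g My) My⁻¹ := by rw [Matrix.vecMul_vecMul]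
        _ = Matrix.vecMul 0 My⁻¹ := by rw [hvm]
        _ = 0 := Matrix.zero_vecMul _
    exact hgi0 (by rw [hg0]; rfl)

  · rintro ⟨c, hc0, hcs⟩ φ hφ1 hφ2 hφ3
    rw [Fintype.not_linearIndependent_iff]
    refine ⟨c, ?_, ?_⟩
    · funext x
      rw [Finset.sum_apply]
      simp only [Pi.smul_apply]
      have : ∀ i : Fin r, c i • (fun x : U => pdoApply s (a i) φ x) x
          = ∑ α ∈ Fintype.piFinset (fun _ : Fin d => Finset.range (s + 1)),
              c i * (a i α x * Dmulti α φ x) := by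
        intro i
        rw [smul_eq_mul]
        simp only [pdoApply]
        rw [Finset.mul_sum]
      rw [Finset.sum_congr rfl fun i _ => this i, Finset.sum_comm]
      rw [Pi.zero_apply]
      apply Finset.sum_eq_zero
      intro α _
      have h1 : ∑ i, c i * (a i α x * Dmulti α φ x) = (∑ i, c i * a i α x) * Dmulti α φ x := by
        rw [Finset.sum_mul]
        exact Finset.sum_congr rfl fun i _ => by ring
      rw [h1, hcs α x x.2, zero_mul]
    · rw [Function.ne_iff] at hc0
      simpa using hc0
end

section
/- Let d ≥ 1 be an integer, U an open subset of ℝ^d, and L_1, …, L_r linear partial differential operators on U with continuous coefficients. Then the following are equivalent: (1) for every real polynomial p ∈ ℝ[x_1, …, x_d], the functions L_1p, …, L_rp (restrictions of the operators applied to p, viewed as continuous functions on U) are linearly dependent in C(U); (2) L_1, …, L_r are linearly dependent, i.e. there exist real numbers c_1, …, c_r, not all zero, such that c_1L_1 + ⋯ + c_rL_r is the zero operator. -/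
section Helpers
open MvPolynomial

namespace Dep
variable {d : ℕ}

noncomputable def PD (α : Fin d → ℕ) (p : MvPolynomial (Fin d) ℝ) : MvPolynomial (Fin d) ℝ :=
  (List.finRange d).foldr (fun i q => (MvPolynomial.pderiv i)^[α i] q) p

lemma hasFDerivAt_eval (p : MvPolynomial (Fin d) ℝ) (x : Fin d → ℝ) :
    HasFDerivAt (fun y : Fin d → ℝ => eval y p)
      (∑ j, eval x (pderiv j p) • (ContinuousLinearMap.proj j : (Fin d → ℝ) →L[ℝ] ℝ)) x := by
  induction p using MvPolynomial.induction_on with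
  | C a =>
      simp only [eval_C, pderiv_C, map_zero, zero_smul, Finset.sum_const_zero]
      exact hasFDerivAt_const a x
  | add p q hp hq =>
      simp only [map_add, add_smul, Finset.sum_add_distrib]
      exact hp.add hq
  | mul_X p j hp =>
      have hXj : HasFDerivAt (fun y : Fin d → ℝ => y j)
          (ContinuousLinearMap.proj j : (Fin d → ℝ) →L[ℝ] ℝ) x :=
        (ContinuousLinearMap.proj j : (Fin d → ℝ) →L[ℝ] ℝ).hasFDerivAt
      have h : HasFDerivAt (fun y : Fin d → ℝ => eval y p * y j) _ x := hp.mul hXj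
      have : (fun y : Fin d → ℝ => eval y p * y j) = fun y => eval y (p * X j) := by
        funext y; simp
      rw [this] at h
      have heq : (∑ j', eval x (pderiv j' (p * X j)) • (ContinuousLinearMap.proj j' : (Fin d → ℝ) →L[ℝ] ℝ))
          = eval x p • (ContinuousLinearMap.proj j : (Fin d → ℝ) →L[ℝ] ℝ)
            + x j • ∑ j', eval x (pderiv j' p) • (ContinuousLinearMap.proj j' : (Fin d → ℝ) →L[ℝ] ℝ) := by
        ext v
        simp only [ContinuousLinearMap.coe_sum', Finset.sum_apply, ContinuousLinearMap.coe_smul',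
          Pi.smul_apply, ContinuousLinearMap.proj_apply, smul_eq_mul, ContinuousLinearMap.add_apply,
          pderiv_mul, pderiv_X, map_add, map_mul, eval_X]
        rw [Finset.mul_sum]
        simp only [add_mul, Finset.sum_add_distrib]
        rw [add_comm]
        congr 1
        · rw [Finset.sum_eq_single j]
          · simp
          · intro b _ hb
            simp [Pi.single_apply, hb]
          · simp
        · refine Finset.sum_congr rfl fun j' _ => by ring
      rw [heq]
      exact h

lemma pderivFun_eval (p : MvPolynomial (Fin d) ℝ) (i : Fin d) :
    pderivFun i (fun y => eval y p) = fun y => eval y (pderiv i p) := by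
  funext x
  rw [pderivFun, (hasFDerivAt_eval p x).fderiv]
  simp only [ContinuousLinearMap.coe_sum', Finset.sum_apply, ContinuousLinearMap.coe_smul',
    Pi.smul_apply, ContinuousLinearMap.proj_apply, smul_eq_mul]
  rw [Finset.sum_eq_single i]
  · simp
  · intro b _ hb; simp [Pi.single_apply, hb]
  · simp

lemma iter_pderivFun_eval (p : MvPolynomial (Fin d) ℝ) (i : Fin d) (n : ℕ) :
    (pderivFun i)^[n] (fun y => eval y p) = fun y => eval y ((pderiv i)^[n] p) := by
  induction n generalizing p with
  | zero => simp
  | succ n ih =>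
      rw [Function.iterate_succ_apply, Function.iterate_succ_apply, pderivFun_eval, ih]

lemma Dmulti_eval (α : Fin d → ℕ) (p : MvPolynomial (Fin d) ℝ) :
    Dmulti α (fun y => eval y p) = fun y => eval y (PD α p) := by
  rw [Dmulti, PD]
  induction List.finRange d generalizing p with
  | nil => rfl
  | cons i L ih =>
      simp only [List.foldr_cons]
      rw [ih, iter_pderivFun_eval]

end Dep

namespace Alg
open MvPolynomial
variable {d : ℕ}

noncomputable def Sm (y : Fin d → ℝ) (γ : Fin d → ℕ) : MvPolynomial (Fin d) ℝ :=
  ∏ j, (X j - C (y j)) ^ (γ j)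

lemma Sm_zero (y : Fin d → ℝ) : Sm y 0 = 1 := by simp [Sm]

lemma Sm_mul_Sm (y : Fin d → ℝ) (γ δ : Fin d → ℕ) : Sm y γ * Sm y δ = Sm y (γ + δ) := by
  rw [Sm, Sm, Sm, ← Finset.prod_mul_distrib]
  exact Finset.prod_congr rfl fun j _ => by rw [Pi.add_apply, pow_add]

lemma Sm_single (y : Fin d → ℝ) (j : Fin d) (n : ℕ) :
    Sm y (Pi.single j n) = (X j - C (y j)) ^ n := by
  rw [Sm, Finset.prod_eq_single j]
  · simp
  · intro b _ hb; simp [Pi.single_apply, hb]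
  · simp

lemma eval_Sm (y : Fin d → ℝ) (γ : Fin d → ℕ) :
    eval y (Sm y γ) = if γ = 0 then 1 else 0 := by
  by_cases h : γ = 0
  · simp [h, Sm_zero]
  · simp only [h, if_false]
    obtain ⟨j, hj⟩ : ∃ j, γ j ≠ 0 := by
      by_contra hc; push_neg at hc; exact h (funext hc)
    rw [Sm, map_prod]
    refine Finset.prod_eq_zero (Finset.mem_univ j) ?_
    simp [zero_pow hj]

lemma pderiv_factor (i j : Fin d) (c : ℝ) (n : ℕ) :
    pderiv i ((X j - C c) ^ n) = if i = j then (n : MvPolynomial (Fin d) ℝ) * (X j - C c) ^ (n - 1) else 0 := by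
  rw [pderiv_pow, map_sub, pderiv_C]
  by_cases h : i = j
  · subst h; simp
  · simp [h]

lemma pderiv_Sm (y : Fin d → ℝ) (γ : Fin d → ℕ) (i : Fin d) :
    pderiv i (Sm y γ) = (γ i) • Sm y (Function.update γ i (γ i - 1)) := by
  have hsplit : Sm y γ = (X i - C (y i)) ^ (γ i) * ∏ j ∈ Finset.univ.erase i, (X j - C (y j)) ^ (γ j) :=
    (Finset.mul_prod_erase Finset.univ _ (Finset.mem_univ i)).symm
  have hrest : pderiv i (∏ j ∈ Finset.univ.erase i, (X j - C (y j)) ^ (γ j)) = 0 := by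
    refine Finset.prod_induction _ (fun q => pderiv i q = 0) ?_ ?_ ?_
    · intro a b ha hb; rw [pderiv_mul, ha, hb]; ring
    · exact pderiv_one
    · intro j hj
      rw [pderiv_factor]
      simp [Ne.symm (Finset.ne_of_mem_erase hj)]
  rw [hsplit, pderiv_mul, hrest, mul_zero, add_zero, pderiv_factor, if_pos rfl]
  have hupdate : Sm y (Function.update γ i (γ i - 1)) =
      (X i - C (y i)) ^ (γ i - 1) * ∏ j ∈ Finset.univ.erase i, (X j - C (y j)) ^ (γ j) := by
    rw [Sm, ← Finset.mul_prod_erase Finset.univ _ (Finset.mem_univ i), Function.update_self]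
    congr 1
    exact Finset.prod_congr rfl fun j hj => by
      rw [Function.update_of_ne (Finset.ne_of_mem_erase hj)]
  rw [hupdate, nsmul_eq_mul]; ring

lemma pd_iter_nsmul (i : Fin d) (n m : ℕ) (q : MvPolynomial (Fin d) ℝ) :
    (pderiv i)^[n] (m • q) = m • (pderiv i)^[n] q := by
  induction n generalizing q with
  | zero => rfl
  | succ n ih => rw [Function.iterate_succ_apply, Function.iterate_succ_apply, map_nsmul, ih]

lemma pd_iter_add (i : Fin d) (n : ℕ) (p q : MvPolynomial (Fin d) ℝ) :
    (pderiv i)^[n] (p + q) = (pderiv i)^[n] p + (pderiv i)^[n] q := by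
  induction n generalizing p q with
  | zero => rfl
  | succ n ih => rw [Function.iterate_succ_apply, Function.iterate_succ_apply,
      Function.iterate_succ_apply, map_add, ih]

lemma pd_iter_rsmul (i : Fin d) (n : ℕ) (c : ℝ) (q : MvPolynomial (Fin d) ℝ) :
    (pderiv i)^[n] (c • q) = c • (pderiv i)^[n] q := by
  induction n generalizing q with
  | zero => rfl
  | succ n ih => rw [Function.iterate_succ_apply, Function.iterate_succ_apply,
      Derivation.map_smul, ih]

lemma pd_iter_Sm (y : Fin d → ℝ) (γ : Fin d → ℕ) (i : Fin d) (n : ℕ) :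
    (pderiv i)^[n] (Sm y γ) =
      ((γ i).descFactorial n) • Sm y (Function.update γ i (γ i - n)) := by
  induction n with
  | zero => simp [Function.update_eq_self]
  | succ n ih =>
      rw [Function.iterate_succ_apply', ih, map_nsmul, pderiv_Sm, Function.update_self,
        Function.update_idem, smul_smul, Nat.descFactorial_succ, Nat.sub_sub]
      ring_nf

lemma foldr_pd_Sm (y : Fin d → ℝ) (β γ : Fin d → ℕ) (L : List (Fin d)) (hL : L.Nodup) :
    L.foldr (fun i q => (pderiv i)^[β i] q) (Sm y γ)
      = ((L.map fun i => (γ i).descFactorial (β i)).prod) •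
        Sm y (fun j => if j ∈ L then γ j - β j else γ j) := by
  induction L with
  | nil => simp
  | cons i L ih =>
      obtain ⟨hiL, hLnd⟩ := List.nodup_cons.mp hL
      rw [List.foldr_cons, ih hLnd, pd_iter_nsmul, pd_iter_Sm]
      simp only [if_neg hiL]
      have h2 : Function.update (fun j => if j ∈ L then γ j - β j else γ j) i (γ i - β i)
          = fun j => if j ∈ i :: L then γ j - β j else γ j := by
        funext j
        by_cases hj : j = i
        · subst hj; simp [hiL]
        · rw [Function.update_of_ne hj]
          simp only [List.mem_cons, hj, false_or]
      rw [h2, List.map_cons, List.prod_cons, smul_smul, Nat.mul_comm]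

noncomputable def PD' := @Dep.PD d

lemma PD_Sm (y : Fin d → ℝ) (β γ : Fin d → ℕ) :
    Dep.PD β (Sm y γ) =
      (((List.finRange d).map fun i => (γ i).descFactorial (β i)).prod) •
        Sm y (fun j => γ j - β j) := by
  rw [Dep.PD, foldr_pd_Sm y β γ _ (List.nodup_finRange d)]
  have : (fun j => if j ∈ List.finRange d then γ j - β j else γ j) = fun j => γ j - β j := by
    funext j; simp [List.mem_finRange]
  rw [this]

lemma eval_PD_Sm_ne (y : Fin d → ℝ) {β γ : Fin d → ℕ} (h : β ≠ γ) :
    eval y (Dep.PD β (Sm y γ)) = 0 := by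
  rw [PD_Sm, map_nsmul, eval_Sm]
  by_cases hc : (fun j => γ j - β j) = (0 : Fin d → ℕ)
  · rw [if_pos hc]
    -- then some β i > γ i, so descFactorial = 0
    have : ∃ i, γ i < β i := by
      by_contra hno
      push_neg at hno
      refine h (funext fun i => le_antisymm (hno i) ?_)
      have := congrFun hc i
      simpa [Nat.sub_eq_zero_iff_le] using this
    obtain ⟨i, hi⟩ := this
    have : ((List.finRange d).map fun i => (γ i).descFactorial (β i)).prod = 0 := by
      rw [List.prod_eq_zero_iff]
      exact List.mem_map.mpr ⟨i, List.mem_finRange i, (Nat.descFactorial_eq_zero_iff_lt).mpr hi⟩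
    rw [this]; simp
  · rw [if_neg hc]; simp

lemma eval_PD_Sm_self (y : Fin d → ℝ) (β : Fin d → ℕ) :
    eval y (Dep.PD β (Sm y β)) ≠ 0 := by
  rw [PD_Sm, map_nsmul, eval_Sm, if_pos (by funext j; simp)]
  have : ((List.finRange d).map fun i => (β i).descFactorial (β i)).prod ≠ 0 := by
    rw [Ne, List.prod_eq_zero_iff]
    intro hmem
    obtain ⟨i, _, hi⟩ := List.mem_map.mp hmem
    rw [Nat.descFactorial_self] at hi
    exact (Nat.factorial_ne_zero _) hi
  simpa using this

lemma PD_add (β : Fin d → ℕ) (p q : MvPolynomial (Fin d) ℝ) :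
    Dep.PD β (p + q) = Dep.PD β p + Dep.PD β q := by
  rw [Dep.PD, Dep.PD, Dep.PD]
  induction List.finRange d generalizing p q with
  | nil => rfl
  | cons i L ih => simp only [List.foldr_cons]; rw [ih, pd_iter_add]

lemma PD_smul (β : Fin d → ℕ) (c : ℝ) (p : MvPolynomial (Fin d) ℝ) :
    Dep.PD β (c • p) = c • Dep.PD β p := by
  rw [Dep.PD, Dep.PD]
  induction List.finRange d generalizing p with
  | nil => rfl
  | cons i L ih => simp only [List.foldr_cons]; rw [ih, pd_iter_rsmul]

noncomputable def lam (y : Fin d → ℝ) (β : Fin d → ℕ) : MvPolynomial (Fin d) ℝ →ₗ[ℝ] ℝ where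
  toFun q := eval y (Dep.PD β q)
  map_add' p q := by rw [PD_add, map_add]
  map_smul' c p := by rw [PD_smul]; simp [smul_eq_C_mul]

@[simp] lemma lam_apply (y : Fin d → ℝ) (β : Fin d → ℕ) (q : MvPolynomial (Fin d) ℝ) :
    lam y β q = eval y (Dep.PD β q) := rfl

noncomputable def evalL (y : Fin d → ℝ) : MvPolynomial (Fin d) ℝ →ₗ[ℝ] ℝ where
  toFun q := eval y q
  map_add' p q := by rw [map_add]
  map_smul' c p := by simp [smul_eq_C_mul]

lemma mem_span_Sm (y : Fin d → ℝ) (q : MvPolynomial (Fin d) ℝ) :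
    q ∈ Submodule.span ℝ (Set.range (Sm y)) := by
  induction q using MvPolynomial.induction_on with
  | C a =>
      have : (C a : MvPolynomial (Fin d) ℝ) = a • Sm y 0 := by
        rw [Sm_zero, smul_eq_C_mul, mul_one]
      rw [this]
      exact Submodule.smul_mem _ _ (Submodule.subset_span ⟨0, rfl⟩)
  | add p q hp hq => exact Submodule.add_mem _ hp hq
  | mul_X p j hp =>
      induction hp using Submodule.span_induction with
      | mem q hq =>
          obtain ⟨γ, rfl⟩ := hq
          have hXj : (X j : MvPolynomial (Fin d) ℝ) = Sm y (Pi.single j 1) + C (y j) := by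
            rw [Sm_single, pow_one]; ring
          have key : Sm y γ * X j = Sm y (γ + Pi.single j 1) + y j • Sm y γ := by
            rw [hXj, mul_add, Sm_mul_Sm]
            congr 1
            rw [smul_eq_C_mul, mul_comm]
          rw [key]
          exact Submodule.add_mem _ (Submodule.subset_span ⟨_, rfl⟩)
            (Submodule.smul_mem _ _ (Submodule.subset_span ⟨_, rfl⟩))
      | zero => simpa using Submodule.zero_mem _
      | add a b ha hb iha ihb => rw [add_mul]; exact Submodule.add_mem _ iha ihb
      | smul c a ha iha => rw [smul_mul_assoc]; exact Submodule.smul_mem _ _ iha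

lemma lam_mul_vanish (y0 : Fin d → ℝ) (j0 : Fin d) {M : ℕ} {β : Fin d → ℕ}
    (hβ : β j0 < M) (f : MvPolynomial (Fin d) ℝ) :
    lam y0 β (f * (X j0 - C (y0 j0)) ^ M) = 0 := by
  have h : f ∈ Submodule.span ℝ (Set.range (Sm y0)) := mem_span_Sm y0 f
  have hker : Submodule.span ℝ (Set.range (Sm y0)) ≤
      LinearMap.ker ((lam y0 β).comp (LinearMap.mulRight ℝ ((X j0 - C (y0 j0)) ^ M))) := by
    rw [Submodule.span_le]
    rintro _ ⟨γ, rfl⟩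
    rw [SetLike.mem_coe, LinearMap.mem_ker, LinearMap.comp_apply, LinearMap.mulRight_apply]
    rw [← Sm_single y0 j0 M, Sm_mul_Sm, lam_apply]
    refine eval_PD_Sm_ne y0 ?_
    intro hc
    have := congrFun hc j0
    simp only [Pi.add_apply, Pi.single_eq_same] at this
    omega
  have := hker h
  rw [LinearMap.mem_ker, LinearMap.comp_apply, LinearMap.mulRight_apply] at this
  exact this

lemma lam_low (y0 : Fin d → ℝ) {α β : Fin d → ℕ} (h : ¬ ∀ j, α j ≤ β j)
    (g : MvPolynomial (Fin d) ℝ) :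
    lam y0 β (Sm y0 α * g) = 0 := by
  have hg : g ∈ Submodule.span ℝ (Set.range (Sm y0)) := mem_span_Sm y0 g
  have hker : Submodule.span ℝ (Set.range (Sm y0)) ≤
      LinearMap.ker ((lam y0 β).comp (LinearMap.mulLeft ℝ (Sm y0 α))) := by
    rw [Submodule.span_le]
    rintro _ ⟨γ, rfl⟩
    rw [SetLike.mem_coe, LinearMap.mem_ker, LinearMap.comp_apply, LinearMap.mulLeft_apply,
      Sm_mul_Sm, lam_apply]
    refine eval_PD_Sm_ne y0 ?_
    intro hc
    refine h fun j => ?_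
    have := congrFun hc j
    simp only [Pi.add_apply] at this
    omega
  have := hker hg
  rw [LinearMap.mem_ker, LinearMap.comp_apply, LinearMap.mulLeft_apply] at this
  exact this

lemma lam_diag (y0 : Fin d → ℝ) (α : Fin d → ℕ) (g : MvPolynomial (Fin d) ℝ) :
    lam y0 α (Sm y0 α * g) = lam y0 α (Sm y0 α) * eval y0 g := by
  have hg : g ∈ Submodule.span ℝ (Set.range (Sm y0)) := mem_span_Sm y0 g
  set T : MvPolynomial (Fin d) ℝ →ₗ[ℝ] ℝ :=
    (lam y0 α).comp (LinearMap.mulLeft ℝ (Sm y0 α)) - (lam y0 α (Sm y0 α)) • evalL y0 with hT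
  have hker : Submodule.span ℝ (Set.range (Sm y0)) ≤ LinearMap.ker T := by
    rw [Submodule.span_le]
    rintro _ ⟨γ, rfl⟩
    rw [SetLike.mem_coe, LinearMap.mem_ker, hT, LinearMap.sub_apply, LinearMap.comp_apply,
      LinearMap.mulLeft_apply, LinearMap.smul_apply, Sm_mul_Sm]
    have hev : evalL y0 (Sm y0 γ) = if γ = 0 then 1 else 0 := eval_Sm y0 γ
    by_cases hγ : γ = 0
    · subst hγ
      rw [hev]
      simp
    · rw [hev, if_neg hγ, smul_zero, lam_apply, eval_PD_Sm_ne y0, sub_zero]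
      intro hc
      refine hγ ?_
      funext j
      have := congrFun hc j
      simp only [Pi.add_apply] at this
      show γ j = 0
      omega
  have := hker hg
  rw [LinearMap.mem_ker, hT, LinearMap.sub_apply, LinearMap.comp_apply,
    LinearMap.mulLeft_apply, LinearMap.smul_apply, sub_eq_zero] at this
  rw [this]
  rfl

lemma construct_step (hd : 1 ≤ d) {r s : ℕ} (y : Fin r → (Fin d → ℝ)) (hy : Function.Injective y)
    (k0 : Fin r) (α : Fin d → ℕ) (hα : ∀ j, α j ≤ s)
    (hrec : ∀ β : Fin d → ℕ, (∀ j, β j ≤ s) → (∀ j, α j ≤ β j) → β ≠ α →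
      ∃ p : MvPolynomial (Fin d) ℝ,
        (∀ β' : Fin d → ℕ, (∀ j, β' j ≤ s) →
          eval (y k0) (Dep.PD β' p) = if β' = β then 1 else 0) ∧
        (∀ l, l ≠ k0 → ∀ β' : Fin d → ℕ, (∀ j, β' j ≤ s) → eval (y l) (Dep.PD β' p) = 0)) :
    ∃ p : MvPolynomial (Fin d) ℝ,
      (∀ β' : Fin d → ℕ, (∀ j, β' j ≤ s) →
        eval (y k0) (Dep.PD β' p) = if β' = α then 1 else 0) ∧
      (∀ l, l ≠ k0 → ∀ β' : Fin d → ℕ, (∀ j, β' j ≤ s) → eval (y l) (Dep.PD β' p) = 0) := by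
  classical
  have hne : ∀ l, l ≠ k0 → ∃ j, y l j ≠ y k0 j := by
    intro l hl
    by_contra h
    push_neg at h
    exact hl (hy (funext h))
  set jc : Fin r → Fin d := fun l => if h : l = k0 then ⟨0, hd⟩ else (hne l h).choose with hjcdef
  have hjc : ∀ l, l ≠ k0 → y l (jc l) ≠ y k0 (jc l) := by
    intro l hl
    rw [hjcdef]
    simp only [dif_neg hl]
    exact (hne l hl).choose_spec
  set g : MvPolynomial (Fin d) ℝ :=
    ∏ l ∈ Finset.univ.erase k0, (X (jc l) - C (y l (jc l))) ^ (s + 1) with hgdef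
  set q0 : MvPolynomial (Fin d) ℝ := Sm (y k0) α * g with hq0def
  -- vanishing at the other points
  have hV : ∀ l, l ≠ k0 → ∀ β' : Fin d → ℕ, (∀ j, β' j ≤ s) → lam (y l) β' q0 = 0 := by
    intro l hl β' hβ'
    have hmem : l ∈ Finset.univ.erase k0 := Finset.mem_erase.mpr ⟨hl, Finset.mem_univ l⟩
    have hsplit : q0 = (Sm (y k0) α * ∏ l' ∈ (Finset.univ.erase k0).erase l,
        (X (jc l') - C (y l' (jc l'))) ^ (s + 1)) * (X (jc l) - C (y l (jc l))) ^ (s + 1) := by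
      rw [hq0def, hgdef, ← Finset.mul_prod_erase _ _ hmem]
      ring
    rw [hsplit]
    exact lam_mul_vanish (y l) (jc l) (Nat.lt_succ_of_le (hβ' (jc l))) _
  -- the leading value
  have hgval : eval (y k0) g ≠ 0 := by
    rw [hgdef, map_prod]
    rw [Finset.prod_ne_zero_iff]
    intro l hl
    rw [map_pow]
    apply pow_ne_zero
    rw [map_sub, eval_X, eval_C, sub_ne_zero]
    exact (hjc l (Finset.mem_erase.mp hl).1).symm
  set e : ℝ := lam (y k0) α (Sm (y k0) α) * eval (y k0) g with hedef
  have he : e ≠ 0 := mul_ne_zero (eval_PD_Sm_self (y k0) α) hgval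
  have hq0diag : lam (y k0) α q0 = e := lam_diag (y k0) α g
  -- bad set
  set B : Finset (Fin d → ℕ) :=
    (Fintype.piFinset fun _ : Fin d => Finset.range (s + 1)).filter
      (fun β => (∀ j, α j ≤ β j) ∧ β ≠ α) with hBdef
  have hmemB : ∀ β : Fin d → ℕ, β ∈ B ↔ ((∀ j, β j ≤ s) ∧ (∀ j, α j ≤ β j) ∧ β ≠ α) := by
    intro β
    rw [hBdef, Finset.mem_filter, Fintype.mem_piFinset]
    simp only [Finset.mem_range, Nat.lt_succ_iff]
  have hrec' : ∀ β : Fin d → ℕ, ∃ p : MvPolynomial (Fin d) ℝ, β ∈ B →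
      ((∀ β' : Fin d → ℕ, (∀ j, β' j ≤ s) →
          eval (y k0) (Dep.PD β' p) = if β' = β then 1 else 0) ∧
        (∀ l, l ≠ k0 → ∀ β' : Fin d → ℕ, (∀ j, β' j ≤ s) → eval (y l) (Dep.PD β' p) = 0)) := by
    intro β
    by_cases h : β ∈ B
    · obtain ⟨hb1, hb2, hb3⟩ := (hmemB β).mp h
      obtain ⟨p, hp⟩ := hrec β hb1 hb2 hb3
      exact ⟨p, fun _ => hp⟩
    · exact ⟨0, fun h' => absurd h' h⟩
  choose pb hpb using hrec'
  refine ⟨e⁻¹ • (q0 - ∑ β ∈ B, lam (y k0) β q0 • pb β), ?_, ?_⟩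
  · intro β' hβ'
    have hlam : ∀ z : Fin r, ∀ βz : Fin d → ℕ,
        lam (y z) βz (e⁻¹ • (q0 - ∑ β ∈ B, lam (y k0) β q0 • pb β))
          = e⁻¹ * (lam (y z) βz q0 - ∑ β ∈ B, lam (y k0) β q0 * lam (y z) βz (pb β)) := by
      intro z βz
      rw [map_smul, map_sub, map_sum, smul_eq_mul]
      congr 2
      exact Finset.sum_congr rfl fun β _ => by rw [map_smul, smul_eq_mul]
    show lam (y k0) β' _ = _
    rw [hlam]
    have hsum : (∑ β ∈ B, lam (y k0) β q0 * lam (y k0) β' (pb β))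
        = if β' ∈ B then lam (y k0) β' q0 else 0 := by
      rw [← Finset.sum_ite_eq B β' (fun β => lam (y k0) β q0)]
      refine Finset.sum_congr rfl fun β hβ => ?_
      have h2 : lam (y k0) β' (pb β) = if β' = β then 1 else 0 := ((hpb β hβ).1) β' hβ'
      rw [h2]
      by_cases hc : β' = β
      · subst hc; simp
      · simp [hc]
    rw [hsum]
    by_cases h1 : β' = α
    · subst h1
      have : β' ∉ B := by
        rw [hmemB]
        rintro ⟨-, -, h⟩
        exact h rfl
      rw [if_neg this, if_pos rfl, sub_zero, hq0diag, inv_mul_cancel₀ he]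
    · rw [if_neg h1]
      by_cases h2 : β' ∈ B
      · rw [if_pos h2, sub_self, mul_zero]
      · rw [if_neg h2, sub_zero]
        have hlow : ¬ ∀ j, α j ≤ β' j := by
          intro hall
          exact h2 ((hmemB β').mpr ⟨hβ', hall, h1⟩)
        rw [hq0def, lam_low (y k0) hlow, mul_zero]
  · intro l hl β' hβ'
    show lam (y l) β' _ = 0
    rw [map_smul, map_sub, map_sum, smul_eq_mul]
    rw [hV l hl β' hβ']
    have : (∑ β ∈ B, lam (y l) β' (lam (y k0) β q0 • pb β)) = 0 := by
      refine Finset.sum_eq_zero fun β hβ => ?_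
      rw [map_smul, smul_eq_mul]
      have h2 : lam (y l) β' (pb β) = 0 := ((hpb β hβ).2) l hl β' hβ'
      rw [h2, mul_zero]
    rw [this, zero_sub, mul_neg, neg_eq_zero, mul_zero]

lemma hermite (hd : 1 ≤ d) {r s : ℕ} (y : Fin r → (Fin d → ℝ)) (hy : Function.Injective y)
    (k0 : Fin r) (α : Fin d → ℕ) (hα : ∀ j, α j ≤ s) :
    ∃ p : MvPolynomial (Fin d) ℝ,
      (∀ β' : Fin d → ℕ, (∀ j, β' j ≤ s) →
        eval (y k0) (Dep.PD β' p) = if β' = α then 1 else 0) ∧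
      (∀ l, l ≠ k0 → ∀ β' : Fin d → ℕ, (∀ j, β' j ≤ s) → eval (y l) (Dep.PD β' p) = 0) := by
  have key : ∀ m : ℕ, ∀ α : Fin d → ℕ, (∀ j, α j ≤ s) → d * s ≤ (∑ j, α j) + m →
      ∃ p : MvPolynomial (Fin d) ℝ,
        (∀ β' : Fin d → ℕ, (∀ j, β' j ≤ s) →
          eval (y k0) (Dep.PD β' p) = if β' = α then 1 else 0) ∧
        (∀ l, l ≠ k0 → ∀ β' : Fin d → ℕ, (∀ j, β' j ≤ s) → eval (y l) (Dep.PD β' p) = 0) := by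
    intro m
    induction m with
    | zero =>
        intro α hα hbound
        refine construct_step hd y hy k0 α hα ?_
        intro β hβs hβge hβne
        exfalso
        have h1 : (∑ j, α j) < ∑ j, β j := by
          have hle : ∀ j, α j ≤ β j := hβge
          obtain ⟨j0, hj0⟩ : ∃ j, α j ≠ β j := by
            by_contra hcc; push_neg at hcc; exact hβne (funext fun j => (hcc j).symm)
          exact Finset.sum_lt_sum (fun j _ => hle j) ⟨j0, Finset.mem_univ j0, lt_of_le_of_ne (hle j0) hj0⟩
        have h2 : ∑ j, β j ≤ d * s := by
          calc ∑ j, β j ≤ ∑ _j : Fin d, s := Finset.sum_le_sum fun j _ => hβs j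
          _ = d * s := by simp [Finset.sum_const, Finset.card_univ, mul_comm]
        omega
    | succ m ih =>
        intro α hα hbound
        refine construct_step hd y hy k0 α hα ?_
        intro β hβs hβge hβne
        refine ih β hβs ?_
        have h1 : (∑ j, α j) < ∑ j, β j := by
          obtain ⟨j0, hj0⟩ : ∃ j, α j ≠ β j := by
            by_contra hcc; push_neg at hcc; exact hβne (funext fun j => (hcc j).symm)
          exact Finset.sum_lt_sum (fun j _ => hβge j) ⟨j0, Finset.mem_univ j0, lt_of_le_of_ne (hβge j0) hj0⟩
        omega
  exact key (d * s) α hα (by omega)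

end Alg

namespace Glue

lemma exists_points {X : Type*} : ∀ (n : ℕ) (v : Fin n → X → ℝ),
    (∀ c : Fin n → ℝ, c ≠ 0 → ∃ t, ∑ i, c i * v i t ≠ 0) →
    ∃ t : Fin n → X, (Matrix.of fun i k => v i (t k)).det ≠ 0 := by
  intro n
  induction n with
  | zero =>
      intro v _
      exact ⟨Fin.elim0, by simp⟩
  | succ n ih =>
      intro v hv
      have hsub : ∀ c' : Fin n → ℝ, c' ≠ 0 → ∃ t, ∑ i, c' i * v i.castSucc t ≠ 0 := by
        intro c' hc'
        obtain ⟨i0, hi0⟩ := Function.ne_iff.mp hc'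
        have hcne : (Fin.snoc c' 0 : Fin (n+1) → ℝ) ≠ 0 := by
          rw [Function.ne_iff]
          exact ⟨i0.castSucc, by simpa [Fin.snoc_castSucc] using hi0⟩
        obtain ⟨t, ht⟩ := hv (Fin.snoc c' 0) hcne
        refine ⟨t, ?_⟩
        rw [Fin.sum_univ_castSucc] at ht
        simpa [Fin.snoc_castSucc, Fin.snoc_last] using ht
      obtain ⟨t', ht'⟩ := ih (fun i => v i.castSucc) hsub
      set cof : Fin (n+1) → ℝ :=
        fun i => (Matrix.of fun i' k' => v (i.succAbove i') (t' k')).det with hcof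
      set e : Fin (n+1) → ℝ := fun i => (-1 : ℝ)^((i:ℕ) + n) * cof i with he
      have hD : ∀ x : X, (Matrix.of fun i k => v i ((Fin.snoc t' x : Fin (n+1) → X) k)).det
          = ∑ i, e i * v i x := by
        intro x
        rw [Matrix.det_succ_column _ (Fin.last n)]
        refine Finset.sum_congr rfl fun i _ => ?_
        have h1 : (Matrix.of fun i k => v i ((Fin.snoc t' x : Fin (n+1) → X) k)) i (Fin.last n) = v i x := by
          simp [Fin.snoc_last]
        have h2 : ((Matrix.of fun i k => v i ((Fin.snoc t' x : Fin (n+1) → X) k)).submatrix i.succAbove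
            (Fin.last n).succAbove) = Matrix.of fun i' k' => v (i.succAbove i') (t' k') := by
          ext i' k'
          simp [Matrix.submatrix_apply, Fin.succAbove_last, Fin.snoc_castSucc]
        rw [h1, h2, he]
        simp only [Fin.val_last]
        ring
      have helast : e (Fin.last n) ≠ 0 := by
        rw [he]
        simp only [Fin.val_last]
        have hmat : (Matrix.of fun i' k' => v ((Fin.last n).succAbove i') (t' k'))
            = Matrix.of fun i k => v i.castSucc (t' k) := by
          ext i' k'
          simp [Fin.succAbove_last]
        have : cof (Fin.last n) = (Matrix.of fun i k => v i.castSucc (t' k)).det := by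
          rw [hcof]
          show (Matrix.of fun i' k' => v ((Fin.last n).succAbove i') (t' k')).det = _
          rw [hmat]
        rw [this]
        have hsign : (-1 : ℝ)^(n + n) = 1 := Even.neg_one_pow ⟨n, rfl⟩
        rw [hsign, one_mul]
        exact ht'
      have hene : e ≠ 0 := Function.ne_iff.mpr ⟨Fin.last n, helast⟩
      obtain ⟨x, hx⟩ := hv e hene
      exact ⟨(Fin.snoc t' x : Fin (n+1) → X), by rw [← hD x] at hx; exact hx⟩

lemma exists_inj_points {d r : ℕ} (hd : 1 ≤ d) (S : Set (Fin r → (Fin d → ℝ)))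
    (hS : IsOpen S) (x : Fin r → Fin d → ℝ) (hx : x ∈ S) :
    ∃ y ∈ S, Function.Injective y := by
  classical
  set i0 : Fin d := ⟨0, hd⟩ with hi0
  set w : Fin d → ℝ := Pi.single i0 1 with hw
  set γ : ℝ → (Fin r → Fin d → ℝ) := fun t => fun k => x k + (t * ((k : ℕ) : ℝ)) • w with hγ
  have hcont : Continuous γ := by
    refine continuous_pi fun k => ?_
    exact continuous_const.add ((continuous_id.mul continuous_const).smul continuous_const)
  have h0 : (0 : ℝ) ∈ γ ⁻¹' S := by
    have : γ 0 = x := by funext k; rw [hγ]; simp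
    simp only [Set.mem_preimage, this]
    exact hx
  obtain ⟨ε, hε, hball⟩ := Metric.isOpen_iff.mp (hS.preimage hcont) 0 h0
  set Bd : Set ℝ := Set.range
    (fun p : Fin r × Fin r => (x p.2 i0 - x p.1 i0) / (((p.1 : ℕ) : ℝ) - ((p.2 : ℕ) : ℝ))) with hBd
  have hBdfin : Bd.Finite := Set.finite_range _
  have hinf : (Metric.ball (0:ℝ) ε).Infinite := by
    rw [Real.ball_eq_Ioo]
    exact Set.Ioo_infinite (by linarith)
  obtain ⟨t, ht⟩ := (hinf.diff hBdfin).nonempty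
  obtain ⟨htball, htBd⟩ := ht
  refine ⟨γ t, hball htball, ?_⟩
  intro k l hkl
  by_contra hne
  have hcoord := congrFun hkl i0
  rw [hγ] at hcoord
  simp only [Pi.add_apply, Pi.smul_apply, hw, Pi.single_eq_same, smul_eq_mul, mul_one] at hcoord
  have hkne : ((k : ℕ) : ℝ) ≠ ((l : ℕ) : ℝ) := by
    intro hc
    exact hne (Fin.val_injective (Nat.cast_injective hc))
  have : t = (x l i0 - x k i0) / (((k : ℕ) : ℝ) - ((l : ℕ) : ℝ)) := by
    field_simp [sub_ne_zero.mpr hkne]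
    linarith [hcoord]
  exact htBd ⟨(k, l), this.symm⟩

end Glue


end Helpers

/-- **Theorem 1 (polynomial test functions).**
Linear partial differential operators `L_1, …, L_r` with continuous coefficients on an
open set `U ⊆ ℝ^d` satisfy: `L_1 p, …, L_r p` are linearly dependent in `C(U)` for every
real polynomial `p ∈ ℝ[x_1, …, x_d]` iff `L_1, …, L_r` are linearly dependent. -/
theorem local_linear_dependence_of_pdos_polynomials
    (d : ℕ) (hd : 1 ≤ d) (U : Set (Fin d → ℝ)) (hU : IsOpen U)
    (r s : ℕ)
    (a : Fin r → (Fin d → ℕ) → (Fin d → ℝ) → ℝ)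
    (hcont : ∀ i α, ContinuousOn (a i α) U)
    (hdeg : ∀ i α, s < ∑ j, α j → a i α = 0) :
    (∀ p : MvPolynomial (Fin d) ℝ,
        ¬ LinearIndependent ℝ
          (fun i : Fin r => fun x : U =>
            pdoApply s (a i) (fun y => MvPolynomial.eval y p) x)) ↔
      ∃ c : Fin r → ℝ, c ≠ 0 ∧ ∀ α : Fin d → ℕ, ∀ x ∈ U, ∑ i, c i * a i α x = 0 := by
  classical
  constructor
  · intro hLHS
    by_contra hno
    push_neg at hno
    have hv : ∀ c : Fin r → ℝ, c ≠ 0 →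
        ∃ t : (Fin d → ℕ) × U, ∑ i, c i * a i t.1 t.2.1 ≠ 0 := by
      intro c hc
      obtain ⟨α, x, hxU, hval⟩ := hno c hc
      exact ⟨(α, ⟨x, hxU⟩), hval⟩
    obtain ⟨t, hdet0⟩ := Glue.exists_points r (fun i (t : (Fin d → ℕ) × U) => a i t.1 t.2.1) hv
    set βf : Fin r → (Fin d → ℕ) := fun k => (t k).1 with hβf
    -- degree bounds
    have hβsum : ∀ k, ∑ j, βf k j ≤ s := by
      intro k
      by_contra hk
      push_neg at hk
      apply hdet0
      apply Matrix.det_eq_zero_of_column_eq_zero k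
      intro i
      show a i (βf k) _ = 0
      rw [hdeg i (βf k) hk]
      rfl
    have hβle : ∀ k j, βf k j ≤ s := by
      intro k j
      refine le_trans ?_ (hβsum k)
      exact Finset.single_le_sum (f := fun j => βf k j) (fun _ _ => Nat.zero_le _) (Finset.mem_univ j)
    -- the open set of point tuples
    set Sset : Set (Fin r → (Fin d → ℝ)) :=
      (Set.pi Set.univ fun _ : Fin r => U) ∩
        (fun z : Fin r → Fin d → ℝ => (Matrix.of fun i k => a i (βf k) (z k)).det) ⁻¹'
          ({0}ᶜ : Set ℝ) with hSset
    have hpiopen : IsOpen (Set.pi Set.univ fun _ : Fin r => U) :=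
      isOpen_set_pi Set.finite_univ (fun _ _ => hU)
    have hdetcont : ContinuousOn
        (fun z : Fin r → Fin d → ℝ => (Matrix.of fun i k => a i (βf k) (z k)).det)
        (Set.pi Set.univ fun _ : Fin r => U) := by
      have hmat : ContinuousOn
          (fun z : Fin r → Fin d → ℝ => (Matrix.of fun i k => a i (βf k) (z k)))
          (Set.pi Set.univ fun _ : Fin r => U) := by
        refine continuousOn_pi.mpr ?_
        intro i
        rw [continuousOn_pi]
        intro k
        exact ContinuousOn.comp (hcont i (βf k)) ((continuous_apply k).continuousOn)
          (fun z hz => hz k (Set.mem_univ k))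
      exact (Continuous.matrix_det continuous_id).comp_continuousOn hmat
    have hSopen : IsOpen Sset :=
      hdetcont.isOpen_inter_preimage hpiopen isOpen_compl_singleton
    have hxS : (fun k => ((t k).2 : Fin d → ℝ)) ∈ Sset := by
      constructor
      · intro k _
        exact (t k).2.2
      · exact hdet0
    obtain ⟨y, hyS, hyinj⟩ := Glue.exists_inj_points hd Sset hSopen _ hxS
    obtain ⟨hyU, hydet⟩ := hyS
    have hydet' : (Matrix.of fun i k => a i (βf k) (y k)).det ≠ 0 := hydet
    -- Hermite interpolation
    have hher := fun k => Alg.hermite hd y hyinj k (βf k) (hβle k)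
    choose pk hp1 hp2 using hher
    set p : MvPolynomial (Fin d) ℝ := ∑ k, pk k with hp
    have hjet : ∀ k, ∀ β' : Fin d → ℕ, (∀ j, β' j ≤ s) →
        MvPolynomial.eval (y k) (Dep.PD β' p) = if β' = βf k then 1 else 0 := by
      intro k β' hβ'
      have : Alg.lam (y k) β' p = ∑ l, Alg.lam (y k) β' (pk l) := map_sum _ _ _
      rw [show MvPolynomial.eval (y k) (Dep.PD β' p) = Alg.lam (y k) β' p from rfl, this]
      rw [Finset.sum_eq_single k]
      · exact hp1 k β' hβ'
      · intro l _ hlk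
        exact hp2 l k (Ne.symm hlk) β' hβ'
      · intro hk
        exact absurd (Finset.mem_univ k) hk
    -- contradiction with hLHS
    apply hLHS p
    refine Fintype.linearIndependent_iff.mpr ?_
    intro g hg
    have hgk : ∀ k, ∑ i, g i * a i (βf k) (y k) = 0 := by
      intro k
      have := congrFun hg ⟨y k, hyU k (Set.mem_univ k)⟩
      simp only [Finset.sum_apply, Pi.smul_apply, smul_eq_mul, Pi.zero_apply] at this
      rw [← this]
      refine Finset.sum_congr rfl fun i _ => ?_
      congr 1
      show a i (βf k) (y k) = pdoApply s (a i) (fun y' => MvPolynomial.eval y' p) (y k)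
      rw [pdoApply]
      have hterm : ∀ β ∈ Fintype.piFinset (fun _ : Fin d => Finset.range (s + 1)),
          a i β (y k) * Dmulti β (fun y' => MvPolynomial.eval y' p) (y k)
            = if β = βf k then a i β (y k) else 0 := by
        intro β hβ
        have hβs : ∀ j, β j ≤ s := by
          intro j
          have := (Fintype.mem_piFinset.mp hβ) j
          rw [Finset.mem_range] at this
          omega
        rw [congrFun (Dep.Dmulti_eval β p) (y k), hjet k β hβs]
        by_cases hc : β = βf k
        · simp [hc]
        · simp [hc]
      rw [Finset.sum_congr rfl hterm, Finset.sum_ite_eq']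
      rw [if_pos]
      rw [Fintype.mem_piFinset]
      intro j
      rw [Finset.mem_range]
      exact Nat.lt_succ_of_le (hβle k j)
    intro i
    by_contra hgi
    have hgne : g ≠ 0 := by
      intro h
      rw [h] at hgi
      exact hgi rfl
    apply hydet'
    refine Matrix.exists_vecMul_eq_zero_iff.mp ⟨g, hgne, ?_⟩
    funext k
    exact hgk k
  · rintro ⟨c, hc, hzero⟩ p hli
    have h0 : ∑ i, c i • (fun x : U =>
        pdoApply s (a i) (fun y => MvPolynomial.eval y p) x) = 0 := by
      funext x
      simp only [Finset.sum_apply, Pi.smul_apply, smul_eq_mul, Pi.zero_apply]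
      have hsw : ∀ i : Fin r, c i * pdoApply s (a i) (fun y => MvPolynomial.eval y p) x
          = ∑ β ∈ Fintype.piFinset (fun _ : Fin d => Finset.range (s + 1)),
              c i * a i β x * Dmulti β (fun y => MvPolynomial.eval y p) x := by
        intro i
        rw [pdoApply, Finset.mul_sum]
        exact Finset.sum_congr rfl fun β _ => by ring
      rw [Finset.sum_congr rfl fun i _ => hsw i, Finset.sum_comm]
      refine Finset.sum_eq_zero fun β _ => ?_
      rw [← Finset.sum_mul]
      have : (∑ i, c i * a i β (x : Fin d → ℝ)) = 0 := hzero β x.1 x.2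
      rw [this, zero_mul]
    have := Fintype.linearIndependent_iff.mp hli c h0
    exact hc (funext fun i => this i)
end

section
/- Multivariate Hermite interpolation: let d, m be positive integers and let k_1, …, k_m be nonnegative integers. For every choice of pairwise distinct points z_1, …, z_m ∈ ℝ^d and every choice of real values c_{q,α} for q = 1, …, m and multi-indices α ∈ ℕ^d with |α| ≤ k_q, there exists a polynomial P ∈ ℝ[x_1, …, x_d] such that D^α P(z_q) = c_{q,α} for every q = 1, …, m and every α ∈ ℕ^d with |α| ≤ k_q. -/
/-- The iterated formal partial derivative
`D^α P = ∂^|α| P / (∂x_1)^{α_1} ⋯ (∂x_d)^{α_d}` of a polynomial `P`. -/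
noncomputable def DmultiPoly {d : ℕ} (α : Fin d → ℕ) (P : MvPolynomial (Fin d) ℝ) :
    MvPolynomial (Fin d) ℝ :=
  (List.finRange d).foldr (fun i Q => (fun R => MvPolynomial.pderiv i R)^[α i] Q) P

namespace HermiteAux

open MvPolynomial

variable {d : ℕ}

lemma pderiv_comm (i j : Fin d) (P : MvPolynomial (Fin d) ℝ) :
    pderiv i (pderiv j P) = pderiv j (pderiv i P) := by
  induction P using MvPolynomial.induction_on' with
  | monomial s a =>
    simp only [pderiv_monomial]
    rcases eq_or_ne i j with rfl | h
    · rfl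
    · have h1 : ((s - Finsupp.single j 1 : Fin d →₀ ℕ)) i = s i := by
        simp [Finsupp.single_eq_of_ne h]
      have h2 : ((s - Finsupp.single i 1 : Fin d →₀ ℕ)) j = s j := by
        simp [Finsupp.single_eq_of_ne h.symm]
      rw [h1, h2, tsub_tsub, tsub_tsub, add_comm (Finsupp.single j 1)]
      ring_nf
  | add p q hp hq => simp [map_add, hp, hq]

lemma iter_add (i : Fin d) (n : ℕ) (P Q : MvPolynomial (Fin d) ℝ) :
    (fun R => pderiv i R)^[n] (P + Q)
      = (fun R => pderiv i R)^[n] P + (fun R => pderiv i R)^[n] Q := by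
  induction n generalizing P Q with
  | zero => simp
  | succ n ih => simp only [Function.iterate_succ_apply, map_add]; exact ih _ _

lemma iter_zero (i : Fin d) (n : ℕ) :
    (fun R => pderiv i R)^[n] (0 : MvPolynomial (Fin d) ℝ) = 0 := by
  induction n with
  | zero => simp
  | succ n ih => simp only [Function.iterate_succ_apply, map_zero]; exact ih

lemma iter_C_mul (i : Fin d) (n : ℕ) (r : ℝ) (P : MvPolynomial (Fin d) ℝ) :
    (fun R => pderiv i R)^[n] (C r * P) = C r * (fun R => pderiv i R)^[n] P := by
  induction n generalizing P with
  | zero => simp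
  | succ n ih => simp only [Function.iterate_succ_apply, pderiv_C_mul]; exact ih _

lemma iter_comm (i j : Fin d) (n : ℕ) (P : MvPolynomial (Fin d) ℝ) :
    pderiv j ((fun R => pderiv i R)^[n] P) = (fun R => pderiv i R)^[n] (pderiv j P) := by
  induction n generalizing P with
  | zero => simp
  | succ n ih =>
    rw [Function.iterate_succ_apply, Function.iterate_succ_apply, ih]
    exact congrArg _ (pderiv_comm j i P)

/-- Fold form of the multi-derivative over an arbitrary list. -/
noncomputable def Dfold (α : Fin d → ℕ) (l : List (Fin d)) (P : MvPolynomial (Fin d) ℝ) :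
    MvPolynomial (Fin d) ℝ :=
  l.foldr (fun i Q => (fun R => MvPolynomial.pderiv i R)^[α i] Q) P

lemma DmultiPoly_eq_Dfold (α : Fin d → ℕ) (P : MvPolynomial (Fin d) ℝ) :
    DmultiPoly α P = Dfold α (List.finRange d) P := rfl

lemma Dfold_add (α : Fin d → ℕ) (l : List (Fin d)) (P Q : MvPolynomial (Fin d) ℝ) :
    Dfold α l (P + Q) = Dfold α l P + Dfold α l Q := by
  induction l with
  | nil => rfl
  | cons i t ih => simp only [Dfold, List.foldr_cons] at *; rw [ih, iter_add]

lemma Dfold_zero (α : Fin d → ℕ) (l : List (Fin d)) :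
    Dfold α l (0 : MvPolynomial (Fin d) ℝ) = 0 := by
  induction l with
  | nil => rfl
  | cons i t ih => simp only [Dfold, List.foldr_cons] at *; rw [ih, iter_zero]

lemma Dfold_C_mul (α : Fin d → ℕ) (l : List (Fin d)) (r : ℝ) (P : MvPolynomial (Fin d) ℝ) :
    Dfold α l (C r * P) = C r * Dfold α l P := by
  induction l with
  | nil => rfl
  | cons i t ih => simp only [Dfold, List.foldr_cons] at *; rw [ih, iter_C_mul]

lemma Dfold_pderiv (α : Fin d → ℕ) (l : List (Fin d)) (j : Fin d) (P : MvPolynomial (Fin d) ℝ) :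
    pderiv j (Dfold α l P) = Dfold α l (pderiv j P) := by
  induction l with
  | nil => rfl
  | cons i t ih => simp only [Dfold, List.foldr_cons] at *; rw [iter_comm, ih]

lemma Dfold_congr {α α' : Fin d → ℕ} (l : List (Fin d)) (h : ∀ i ∈ l, α i = α' i)
    (P : MvPolynomial (Fin d) ℝ) : Dfold α l P = Dfold α' l P := by
  induction l with
  | nil => rfl
  | cons i t ih =>
    simp only [Dfold, List.foldr_cons] at *
    rw [h i (List.mem_cons_self), ih fun j hj => h j (List.mem_cons_of_mem i hj)]

lemma Dfold_id {α : Fin d → ℕ} (l : List (Fin d)) (h : ∀ i ∈ l, α i = 0)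
    (P : MvPolynomial (Fin d) ℝ) : Dfold α l P = P := by
  induction l with
  | nil => rfl
  | cons i t ih =>
    simp only [Dfold, List.foldr_cons] at *
    rw [h i (List.mem_cons_self), Function.iterate_zero_apply,
      ih fun j hj => h j (List.mem_cons_of_mem i hj)]

lemma Dfold_shift (α : Fin d → ℕ) (l : List (Fin d)) (j : Fin d) (hj : j ∈ l) (hl : l.Nodup)
    (P : MvPolynomial (Fin d) ℝ) :
    Dfold (Function.update α j (α j + 1)) l P = Dfold α l (pderiv j P) := by
  induction l with
  | nil => simp at hj
  | cons i t ih =>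
    rcases List.nodup_cons.mp hl with ⟨hit, ht⟩
    have hfold : ∀ (γ : Fin d → ℕ) (Q : MvPolynomial (Fin d) ℝ),
        Dfold γ (i :: t) Q = (fun R => pderiv i R)^[γ i] (Dfold γ t Q) := fun _ _ => rfl
    rcases eq_or_ne i j with h | hij
    · subst h
      rw [hfold, hfold, Function.update_self,
        Dfold_congr t (fun a ha => Function.update_of_ne (by rintro rfl; exact hit ha) _ _) P,
        Function.iterate_succ_apply, ← Dfold_pderiv]
    · have hjt : j ∈ t := by
        rcases List.mem_cons.mp hj with h | h
        · exact absurd h.symm hij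
        · exact h
      rw [hfold, hfold, Function.update_of_ne hij, ih hjt ht]

lemma Dmulti_add (α : Fin d → ℕ) (P Q : MvPolynomial (Fin d) ℝ) :
    DmultiPoly α (P + Q) = DmultiPoly α P + DmultiPoly α Q := Dfold_add _ _ _ _

lemma Dmulti_zero (α : Fin d → ℕ) : DmultiPoly α (0 : MvPolynomial (Fin d) ℝ) = 0 :=
  Dfold_zero _ _

lemma Dmulti_C_mul (α : Fin d → ℕ) (r : ℝ) (P : MvPolynomial (Fin d) ℝ) :
    DmultiPoly α (C r * P) = C r * DmultiPoly α P := Dfold_C_mul _ _ _ _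

lemma Dmulti_id {α : Fin d → ℕ} (h : ∀ i, α i = 0) (P : MvPolynomial (Fin d) ℝ) :
    DmultiPoly α P = P := Dfold_id _ (fun i _ => h i) _

lemma Dmulti_sum {ι : Type*} (s : Finset ι) (f : ι → MvPolynomial (Fin d) ℝ) (α : Fin d → ℕ) :
    DmultiPoly α (∑ x ∈ s, f x) = ∑ x ∈ s, DmultiPoly α (f x) := by
  classical
  induction s using Finset.induction with
  | empty => simpa using Dmulti_zero α
  | insert a s hx ih =>
    rw [Finset.sum_insert hx, Finset.sum_insert hx, Dmulti_add, ih]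

lemma Dmulti_shift (α : Fin d → ℕ) (j : Fin d) (P : MvPolynomial (Fin d) ℝ) :
    DmultiPoly (Function.update α j (α j + 1)) P = DmultiPoly α (pderiv j P) :=
  Dfold_shift α _ j (List.mem_finRange j) (List.nodup_finRange d) P

lemma Dmulti_step (α : Fin d → ℕ) (j : Fin d) (hj : α j ≠ 0) (P : MvPolynomial (Fin d) ℝ) :
    DmultiPoly α P = DmultiPoly (Function.update α j (α j - 1)) (pderiv j P) := by
  have h : Function.update (Function.update α j (α j - 1)) j
      ((Function.update α j (α j - 1)) j + 1) = α := by
    ext i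
    rcases eq_or_ne i j with rfl | h
    · simp only [Function.update_self]
      omega
    · simp [Function.update_of_ne h]
  rw [← Dmulti_shift (Function.update α j (α j - 1)) j P, h]

lemma sum_update_sub (α : Fin d → ℕ) (j : Fin d) (hj : α j ≠ 0) :
    (∑ i, Function.update α j (α j - 1) i) + 1 = ∑ i, α i := by
  classical
  have h : ∑ i, α i = ∑ i, (Function.update α j (α j - 1) i + if i = j then 1 else 0) := by
    apply Finset.sum_congr rfl
    intro x _
    rcases eq_or_ne x j with rfl | h
    · simp only [Function.update_self, if_pos rfl, eq_self_iff_true]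
      have := Nat.succ_pred_eq_of_pos (Nat.pos_of_ne_zero hj)
      simp only [if_true]
      omega
    · simp [Function.update_of_ne h, h]
  rw [h, Finset.sum_add_distrib]
  simp

/-- Vanishing lemma: a polynomial divisible by `(X i - z i)^n` has all derivatives
of order `< n` in direction `i` vanishing at `z`. -/
lemma eval_D_vanish (z : Fin d → ℝ) (i : Fin d) :
    ∀ s (α : Fin d → ℕ), (∑ j, α j) = s → ∀ (n : ℕ) (Q : MvPolynomial (Fin d) ℝ), α i < n →
      eval z (DmultiPoly α ((X i - C (z i)) ^ n * Q)) = 0 := by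
  intro s
  induction s using Nat.strong_induction_on with
  | _ s ih =>
  intro α hs n Q hn
  by_cases hα : ∀ j, α j = 0
  · rw [Dmulti_id hα]
    have hn0 : n ≠ 0 := by have h := hα i; omega
    simp [sub_self, zero_pow hn0]
  · push_neg at hα
    obtain ⟨j, hj⟩ := hα
    have hsum := sum_update_sub α j hj
    rw [Dmulti_step α j hj]
    rcases eq_or_ne j i with rfl | hji
    · have hd1 : pderiv j (X j - C (z j) : MvPolynomial (Fin d) ℝ) = 1 := by
        rw [map_sub, pderiv_X_self, pderiv_C, sub_zero]
      have e1 : pderiv j ((X j - C (z j)) ^ n * Q)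
          = C (n : ℝ) * ((X j - C (z j)) ^ (n - 1) * Q)
            + (X j - C (z j)) ^ n * pderiv j Q := by
        rw [pderiv_mul, pderiv_pow, hd1, mul_one,
          show ((n : MvPolynomial (Fin d) ℝ)) = C (n : ℝ) from (map_natCast C n).symm]
        ring
      rw [e1, Dmulti_add, Dmulti_C_mul, map_add, map_mul, eval_C]
      have h1 := ih (∑ x, Function.update α j (α j - 1) x) (by omega)
        (Function.update α j (α j - 1)) rfl (n - 1) Q
        (by rw [Function.update_self]; omega)
      have h2 := ih (∑ x, Function.update α j (α j - 1) x) (by omega)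
        (Function.update α j (α j - 1)) rfl n (pderiv j Q)
        (by rw [Function.update_self]; omega)
      rw [h1, h2, mul_zero, add_zero]
    · have hd0 : pderiv j (X i - C (z i) : MvPolynomial (Fin d) ℝ) = 0 := by
        rw [map_sub, pderiv_X_of_ne hji.symm, pderiv_C, sub_zero]
      have e2 : pderiv j ((X i - C (z i)) ^ n * Q)
          = (X i - C (z i)) ^ n * pderiv j Q := by
        rw [pderiv_mul, pderiv_pow, hd0, mul_zero, zero_mul, zero_add]
      rw [e2]
      exact ih (∑ x, Function.update α j (α j - 1) x) (by omega)
        (Function.update α j (α j - 1)) rfl n (pderiv j Q)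
        (by rw [Function.update_of_ne hji.symm]; omega)

/-- Standard shifted monomial `∏ i (X i - z i)^(β i)`. -/
noncomputable def Nmono (z : Fin d → ℝ) (β : Fin d → ℕ) : MvPolynomial (Fin d) ℝ :=
  ∏ i, (X i - C (z i)) ^ (β i)

lemma pderiv_prod_zero (z : Fin d → ℝ) (β : Fin d → ℕ) (j : Fin d) (s : Finset (Fin d))
    (hj : j ∉ s) : pderiv j (∏ i ∈ s, (X i - C (z i)) ^ (β i) : MvPolynomial (Fin d) ℝ) = 0 := by
  classical
  induction s using Finset.induction with
  | empty => simp
  | @insert a t ha ih =>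
    rw [Finset.prod_insert ha, pderiv_mul, ih (fun h => hj (Finset.mem_insert_of_mem h)),
      mul_zero, add_zero, pderiv_pow]
    have hja : a ≠ j := fun h => hj (h ▸ Finset.mem_insert_self a t)
    rw [map_sub, pderiv_X_of_ne hja, pderiv_C, sub_zero, mul_zero, zero_mul]

/-- Diagonal lemma: `eval z (D^β (N_β * W)) = β! * eval z W`. -/
lemma eval_D_diag (z : Fin d → ℝ) :
    ∀ s (β : Fin d → ℕ), (∑ j, β j) = s → ∀ (W : MvPolynomial (Fin d) ℝ),
      eval z (DmultiPoly β (Nmono z β * W)) = (∏ i, (β i).factorial : ℝ) * eval z W := by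
  intro s
  induction s using Nat.strong_induction_on with
  | _ s ih =>
  intro β hs W
  by_cases hβ : ∀ j, β j = 0
  · have h1 : Nmono z β = 1 := by
      unfold Nmono
      rw [Finset.prod_eq_one]
      intro x _
      rw [hβ, pow_zero]
    have h2 : ∀ i, (β i).factorial = 1 := fun i => by rw [hβ]; rfl
    rw [h1, one_mul, Dmulti_id hβ]
    simp [h2]
  · push_neg at hβ
    obtain ⟨j, hj⟩ := hβ
    have hsum := sum_update_sub β j hj
    set β' := Function.update β j (β j - 1) with hβ'
    set R : MvPolynomial (Fin d) ℝ := ∏ x ∈ Finset.univ.erase j, (X x - C (z x)) ^ (β x)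
      with hR
    have hsplit : Nmono z β = (X j - C (z j)) ^ (β j) * R :=
      (Finset.mul_prod_erase Finset.univ _ (Finset.mem_univ j)).symm
    have hR' : Nmono z β' = (X j - C (z j)) ^ (β j - 1) * R := by
      unfold Nmono
      rw [← Finset.mul_prod_erase Finset.univ _ (Finset.mem_univ j)]
      congr 1
      · rw [hβ', Function.update_self]
      · apply Finset.prod_congr rfl
        intro x hx
        rw [hβ', Function.update_of_ne (Finset.ne_of_mem_erase hx)]
    have hd1 : pderiv j (X j - C (z j) : MvPolynomial (Fin d) ℝ) = 1 := by
      rw [map_sub, pderiv_X_self, pderiv_C, sub_zero]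
    have hpow : (X j - C (z j) : MvPolynomial (Fin d) ℝ) ^ (β j)
        = (X j - C (z j)) ^ (β j - 1) * (X j - C (z j)) := by
      conv_lhs => rw [show β j = (β j - 1) + 1 by omega]
      rw [pow_succ]
    have e : pderiv j (Nmono z β * W)
        = C ((β j : ℝ)) * (Nmono z β' * W)
          + Nmono z β' * ((X j - C (z j)) * pderiv j W) := by
      rw [hsplit, hR', mul_assoc, pderiv_mul, pderiv_mul,
        pderiv_prod_zero z β j _ (Finset.notMem_erase j _), pderiv_pow, hd1, mul_one,
        show ((β j : MvPolynomial (Fin d) ℝ)) = C (β j : ℝ) from (map_natCast C (β j)).symm]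
      rw [hpow]
      ring
    rw [Dmulti_step β j hj, e, Dmulti_add, Dmulti_C_mul, map_add, map_mul, eval_C]
    have h1 := ih (∑ x, β' x) (by omega) β' rfl W
    have h2 := ih (∑ x, β' x) (by omega) β' rfl ((X j - C (z j)) * pderiv j W)
    rw [h1, h2]
    have hz : eval z ((X j - C (z j)) * pderiv j W) = 0 := by
      simp [sub_self]
    rw [hz, mul_zero, add_zero]
    have hfac : (β j) * ∏ i, (β' i).factorial = ∏ i, (β i).factorial := by
      rw [← Finset.mul_prod_erase Finset.univ (fun i => (β i).factorial) (Finset.mem_univ j),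
        ← Finset.mul_prod_erase Finset.univ (fun i => (β' i).factorial) (Finset.mem_univ j),
        Finset.prod_congr rfl
          (fun x hx => by rw [hβ', Function.update_of_ne (Finset.ne_of_mem_erase hx)]),
        ← mul_assoc, hβ', Function.update_self,
        Nat.mul_factorial_pred hj]
    have hfacR : (β j : ℝ) * ∏ i, ((β' i).factorial : ℝ) = ∏ i, ((β i).factorial : ℝ) := by
      have h := congrArg (fun n : ℕ => (n : ℝ)) hfac
      push_cast at h
      exact h
    rw [← mul_assoc, hfacR]

/-- Single-point Hermite interpolation with a unit `W`. -/
lemma point_solver (hd : 0 < d) (z : Fin d → ℝ) (W : MvPolynomial (Fin d) ℝ)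
    (hW : eval z W ≠ 0) (kk : ℕ) (cc : (Fin d → ℕ) → ℝ) :
    ∃ Q : MvPolynomial (Fin d) ℝ, ∀ α : Fin d → ℕ, (∑ j, α j) ≤ kk →
      eval z (DmultiPoly α (Q * W)) = cc α := by
  classical
  induction kk with
  | zero =>
    refine ⟨C (cc 0 / eval z W), ?_⟩
    intro α hα
    have hα0 : α = 0 := funext fun i => by
      have := Finset.single_le_sum (f := α) (fun i _ => Nat.zero_le _) (Finset.mem_univ i)
      simp only [Pi.zero_apply]
      omega
    subst hα0
    rw [Dmulti_id (α := 0) (fun i => rfl), map_mul, eval_C, div_mul_cancel₀ _ hW]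
  | succ kk ihk =>
    obtain ⟨Q, hQ⟩ := ihk
    set T := (Fintype.piFinset fun _ : Fin d => Finset.range (kk + 2)).filter
      (fun α' => ∑ j, α' j = kk + 1) with hT
    set t : (Fin d → ℕ) → ℝ := fun α' =>
      (cc α' - eval z (DmultiPoly α' (Q * W))) /
        ((∏ i, ((α' i).factorial : ℝ)) * eval z W) with ht
    refine ⟨Q + ∑ α' ∈ T, C (t α') * Nmono z α', ?_⟩
    intro α hα
    have hexp : (Q + ∑ α' ∈ T, C (t α') * Nmono z α') * W
        = Q * W + ∑ α' ∈ T, C (t α') * (Nmono z α' * W) := by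
      rw [add_mul, Finset.sum_mul]
      congr 1
      exact Finset.sum_congr rfl fun α' _ => by ring
    rw [hexp, Dmulti_add, Dmulti_sum, map_add, map_sum]
    have hvan : ∀ α' ∈ T, α' ≠ α →
        eval z (DmultiPoly α (C (t α') * (Nmono z α' * W))) = 0 := by
      intro α' hα' hne
      have hsum' : (∑ j, α' j) = kk + 1 := (Finset.mem_filter.mp hα').2
      obtain ⟨j, hjlt⟩ : ∃ j, α j < α' j := by
        by_contra hcon
        push_neg at hcon
        have hlt : ∑ j, α' j < ∑ j, α j := by
          apply Finset.sum_lt_sum (fun j _ => hcon j)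
          obtain ⟨j, hj⟩ := Function.ne_iff.mp hne
          exact ⟨j, Finset.mem_univ j, lt_of_le_of_ne (hcon j) hj⟩
        omega
      rw [Dmulti_C_mul, map_mul, eval_C]
      have hsplit : Nmono z α' * W = (X j - C (z j)) ^ (α' j) *
          ((∏ x ∈ Finset.univ.erase j, (X x - C (z x)) ^ (α' x)) * W) := by
        unfold Nmono
        rw [← Finset.mul_prod_erase Finset.univ _ (Finset.mem_univ j), mul_assoc]
      rw [hsplit, eval_D_vanish z j _ α rfl (α' j) _ hjlt, mul_zero]
    rcases Nat.lt_or_ge (∑ j, α j) (kk + 1) with hcase | hcase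
    · have hz : ∀ α' ∈ T, eval z (DmultiPoly α (C (t α') * (Nmono z α' * W))) = 0 := by
        intro α' hα'
        apply hvan α' hα'
        intro h
        have hsum' : (∑ j, α' j) = kk + 1 := (Finset.mem_filter.mp hα').2
        rw [h] at hsum'
        omega
      rw [Finset.sum_eq_zero hz, add_zero]
      exact hQ α (by omega)
    · have hsumα : ∑ j, α j = kk + 1 := by omega
      have hαT : α ∈ T := by
        rw [hT, Finset.mem_filter]
        refine ⟨?_, hsumα⟩
        rw [Fintype.mem_piFinset]
        intro i
        rw [Finset.mem_range]
        have := Finset.single_le_sum (f := α) (fun i _ => Nat.zero_le _) (Finset.mem_univ i)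
        omega
      rw [Finset.sum_eq_single_of_mem α hαT (fun α' hα' hne => hvan α' hα' hne)]
      rw [Dmulti_C_mul, map_mul, eval_C, eval_D_diag z _ α rfl W]
      have hne0 : (∏ i, ((α i).factorial : ℝ)) * eval z W ≠ 0 := by
        apply mul_ne_zero _ hW
        rw [Finset.prod_ne_zero_iff]
        intro i _
        exact_mod_cast Nat.cast_ne_zero.mpr (Nat.factorial_ne_zero _)
      rw [ht]
      rw [div_mul_cancel₀ _ hne0]
      ring

end HermiteAux

/-- **Theorem 2 (multivariate Hermite interpolation).**
Given pairwise distinct points `z_1, …, z_m ∈ ℝ^d` and prescribed values `c_{q,α}` for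
all multi-indices `α` with `|α| ≤ k_q`, there is a polynomial `P ∈ ℝ[x_1, …, x_d]` with
`D^α P (z_q) = c_{q,α}` for all `q` and all `|α| ≤ k_q`. -/
theorem multivariate_hermite_interpolation
    (d m : ℕ) (hd : 0 < d) (hm : 0 < m) (k : Fin m → ℕ)
    (z : Fin m → Fin d → ℝ) (hz : Function.Injective z)
    (c : Fin m → (Fin d → ℕ) → ℝ) :
    ∃ P : MvPolynomial (Fin d) ℝ, ∀ q : Fin m, ∀ α : Fin d → ℕ, (∑ j, α j) ≤ k q →
      MvPolynomial.eval (z q) (DmultiPoly α P) = c q α := by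
  classical
  open MvPolynomial HermiteAux in
  have hzne : ∀ p q : Fin m, ∃ i : Fin d, p ≠ q → z p i ≠ z q i := by
    intro p q
    rcases eq_or_ne p q with rfl | hpq
    · exact ⟨⟨0, hd⟩, fun h => absurd rfl h⟩
    · have h : z p ≠ z q := fun h => hpq (hz h)
      obtain ⟨i, hi⟩ := Function.ne_iff.mp h
      exact ⟨i, fun _ => hi⟩
  choose ι hι using hzne
  have hsolve : ∀ q : Fin m, ∃ Q : MvPolynomial (Fin d) ℝ, ∀ α : Fin d → ℕ,
      (∑ j, α j) ≤ k q → MvPolynomial.eval (z q) (DmultiPoly α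
        (Q * ∏ p ∈ Finset.univ.erase q,
          (MvPolynomial.X (ι p q) - MvPolynomial.C (z p (ι p q))) ^ (k p + 1))) = c q α := by
    intro q
    apply HermiteAux.point_solver hd (z q) _ _ (k q) (c q)
    rw [map_prod, Finset.prod_ne_zero_iff]
    intro p hp
    simp only [map_pow, map_sub, MvPolynomial.eval_X, MvPolynomial.eval_C]
    apply pow_ne_zero
    exact sub_ne_zero_of_ne (hι p q (Finset.ne_of_mem_erase hp)).symm
  choose Q hQ using hsolve
  refine ⟨∑ q, Q q * ∏ p ∈ Finset.univ.erase q,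
    (MvPolynomial.X (ι p q) - MvPolynomial.C (z p (ι p q))) ^ (k p + 1), ?_⟩
  intro p α hα
  rw [HermiteAux.Dmulti_sum, map_sum]
  rw [Finset.sum_eq_single_of_mem p (Finset.mem_univ p)]
  · exact hQ p α hα
  · intro q _ hqp
    have hpq : p ∈ Finset.univ.erase q := Finset.mem_erase.mpr ⟨hqp.symm, Finset.mem_univ p⟩
    have hsplit : Q q * ∏ x ∈ Finset.univ.erase q,
        (MvPolynomial.X (ι x q) - MvPolynomial.C (z x (ι x q))) ^ (k x + 1)
        = (MvPolynomial.X (ι p q) - MvPolynomial.C (z p (ι p q))) ^ (k p + 1) *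
          ((∏ x ∈ (Finset.univ.erase q).erase p,
            (MvPolynomial.X (ι x q) - MvPolynomial.C (z x (ι x q))) ^ (k x + 1)) * Q q) := by
      rw [← Finset.mul_prod_erase _ _ hpq]
      ring
    rw [hsplit]
    exact HermiteAux.eval_D_vanish (z p) (ι p q) _ α rfl (k p + 1) _ (by
      have := Finset.single_le_sum (f := α) (fun i _ => Nat.zero_le _)
        (Finset.mem_univ (ι p q))
      omega)
end

section
/- Let 𝔽 be a field and let p_1, …, p_m be elements of the free algebra 𝔽⟨x_1, …, x_d⟩. Then the following are equivalent: (1) for every n ∈ ℕ, every d-tuple of matrices A_1, …, A_d ∈ 𝔽^{n×n}, and every vector v ∈ 𝔽^n, the vectors p_1(A_1, …, A_d)v, …, p_m(A_1, …, A_d)v are linearly dependent over 𝔽; (2) for every n ∈ ℕ and every A_1, …, A_d ∈ 𝔽^{n×n}, the matrices p_1(A_1, …, A_d), …, p_m(A_1, …, A_d) are linearly dependent over 𝔽; (3) p_1, …, p_m are linearly dependent in 𝔽⟨x_1, …, x_d⟩. -/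
open Finsupp FreeMonoid

namespace FreeAlgLocGlobAux

variable {𝔽 : Type*} [Field 𝔽] {d : ℕ}

/-- Words of length at most `N`. -/
def S (d N : ℕ) : Set (FreeMonoid (Fin d)) := {w | w.length ≤ N}

lemma S_finite (d N : ℕ) : (S d N).Finite := List.finite_length_le (Fin d) N

noncomputable instance (d N : ℕ) : DecidablePred (· ∈ S d N) := Classical.decPred _

set_option maxHeartbeats 1000000 in
set_option synthInstance.maxHeartbeats 200000 in
/-- The key construction: if `p` is linearly independent in the free algebra, there are
matrices `A` and a vector `v` witnessing independence of the `p i (A) v`. -/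
theorem exists_indep (m : ℕ) (p : Fin m → FreeAlgebra 𝔽 (Fin d))
    (hp : LinearIndependent 𝔽 p) :
    ∃ (n : ℕ) (A : Fin d → Matrix (Fin n) (Fin n) 𝔽) (v : Fin n → 𝔽),
      LinearIndependent 𝔽
        (fun i : Fin m => (FreeAlgebra.lift 𝔽 A (p i)).mulVec v) := by
  classical
  set ψ : FreeAlgebra 𝔽 (Fin d) ≃ₐ[𝔽] MonoidAlgebra 𝔽 (FreeMonoid (Fin d)) :=
    FreeAlgebra.equivMonoidAlgebraFreeMonoid with hψ
  set N : ℕ := Finset.univ.sup fun i : Fin m => (ψ (p i)).coeff.support.sup FreeMonoid.length with hN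
  haveI : Fintype (S d N) := (S_finite d N).fintype
  set W : Submodule 𝔽 (MonoidAlgebra 𝔽 (FreeMonoid (Fin d))) := MonoidAlgebra.supported 𝔽 𝔽 (S d N)
    with hW
  haveI : FiniteDimensional 𝔽 W :=
    Module.Finite.equiv (MonoidAlgebra.supportedEquivFinsupp (S d N)).symm
  set π : MonoidAlgebra 𝔽 (FreeMonoid (Fin d)) →ₗ[𝔽] W :=
    LinearMap.codRestrict W ((MonoidAlgebra.coeffLinearEquiv 𝔽).symm.toLinearMap ∘ₗ
      (Finsupp.supported 𝔽 𝔽 (S d N)).subtype ∘ₗ Finsupp.restrictDom 𝔽 𝔽 (S d N) ∘ₗ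
      (MonoidAlgebra.coeffLinearEquiv 𝔽).toLinearMap)
      (fun u => (Finsupp.restrictDom 𝔽 𝔽 (S d N) u.coeff).2) with hπ
  set f : Fin d → Module.End 𝔽 W := fun j =>
    π ∘ₗ (LinearMap.mulLeft 𝔽 (MonoidAlgebra.single (FreeMonoid.of j) (1 : 𝔽))) ∘ₗ W.subtype
    with hf
  have hπcoe : ∀ u : MonoidAlgebra 𝔽 (FreeMonoid (Fin d)),
      ((π u : W) : MonoidAlgebra 𝔽 (FreeMonoid (Fin d))) = MonoidAlgebra.ofCoeff (Finsupp.filter (· ∈ S d N) u.coeff) :=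
    fun u => rfl
  have hπs : ∀ (w : FreeMonoid (Fin d)) (c : 𝔽),
      ((π (MonoidAlgebra.single w c) : W) : MonoidAlgebra 𝔽 (FreeMonoid (Fin d)))
        = if w ∈ S d N then MonoidAlgebra.single w c else 0 := by
    intro w c
    rw [hπcoe]
    split_ifs with h
    · exact congrArg MonoidAlgebra.ofCoeff (Finsupp.filter_single_of_pos _ h)
    · exact congrArg MonoidAlgebra.ofCoeff (Finsupp.filter_single_of_neg _ h)
  -- truncation absorbs: π (x_j * π u) = π (x_j * u)
  have hA : ∀ (j : Fin d) (u : MonoidAlgebra 𝔽 (FreeMonoid (Fin d))),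
      π (MonoidAlgebra.single (FreeMonoid.of j) (1 : 𝔽) * ((π u : W) : MonoidAlgebra 𝔽 (FreeMonoid (Fin d))))
        = π (MonoidAlgebra.single (FreeMonoid.of j) (1 : 𝔽) * u) := by
    intro j u
    induction u using MonoidAlgebra.induction_linear with
    | zero => simp
    | add a b ha hb =>
        rw [map_add, Submodule.coe_add, mul_add, mul_add, map_add, map_add, ha, hb]
    | single w c =>
        rw [hπs w c]
        split_ifs with h
        · rfl
        · have h2 : (FreeMonoid.of j * w) ∉ S d N := by
            intro hmem
            apply h
            have hlen : (FreeMonoid.of j * w).length = w.length + 1 := by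
              rw [FreeMonoid.length_mul, FreeMonoid.length_of]; omega
            simp only [S, Set.mem_setOf_eq] at hmem ⊢
            omega
          rw [mul_zero, map_zero, MonoidAlgebra.single_mul_single, one_mul]
          apply Subtype.ext
          rw [Submodule.coe_zero, hπs]
          rw [if_neg h2]
  -- per-word computation
  have hword : ∀ w : FreeMonoid (Fin d),
      FreeAlgebra.lift 𝔽 f (ψ.symm (MonoidAlgebra.single w (1 : 𝔽))) (π 1)
        = π (MonoidAlgebra.single w (1 : 𝔽)) := by
    intro w
    induction w using FreeMonoid.recOn with
    | one =>
        rw [show MonoidAlgebra.single (1 : FreeMonoid (Fin d)) (1 : 𝔽) = 1 from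
          (MonoidAlgebra.one_def).symm]
        rw [map_one, map_one]
        rfl
    | of_mul x xs ih =>
        have hsm : MonoidAlgebra.single (FreeMonoid.of x * xs) (1 : 𝔽)
            = MonoidAlgebra.single (FreeMonoid.of x) (1 : 𝔽) * MonoidAlgebra.single xs (1 : 𝔽) := by
          rw [MonoidAlgebra.single_mul_single, one_mul]
        have hψι : ψ.symm (MonoidAlgebra.single (FreeMonoid.of x) (1 : 𝔽))
            = FreeAlgebra.ι 𝔽 x := by
          apply ψ.injective
          rw [AlgEquiv.apply_symm_apply, hψ]
          show _ = FreeAlgebra.lift 𝔽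
            (fun x => (MonoidAlgebra.of 𝔽 (FreeMonoid (Fin d))) (FreeMonoid.of x))
            (FreeAlgebra.ι 𝔽 x)
          rw [FreeAlgebra.lift_ι_apply]
          rfl
        rw [hsm, map_mul, hψι, map_mul]
        have : (FreeAlgebra.lift 𝔽 f (FreeAlgebra.ι 𝔽 x)) = f x := FreeAlgebra.lift_ι_apply _ _
        rw [Module.End.mul_apply, this, ih]
        have : f x (π (MonoidAlgebra.single xs (1 : 𝔽)))
            = π (MonoidAlgebra.single (FreeMonoid.of x) (1 : 𝔽)
                * ((π (MonoidAlgebra.single xs (1 : 𝔽)) : W) : MonoidAlgebra 𝔽 (FreeMonoid (Fin d)))) := rfl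
        rw [this, hA, ← hsm]
  -- general computation
  have hB : ∀ q : FreeAlgebra 𝔽 (Fin d),
      FreeAlgebra.lift 𝔽 f q (π 1) = π (ψ q) := by
    intro q
    have : ∀ u : MonoidAlgebra 𝔽 (FreeMonoid (Fin d)),
        FreeAlgebra.lift 𝔽 f (ψ.symm u) (π 1) = π u := by
      intro u
      induction u using MonoidAlgebra.induction_linear with
      | zero => simp
      | add a b ha hb =>
          rw [map_add ψ.symm, map_add (FreeAlgebra.lift 𝔽 f), map_add π,
            LinearMap.add_apply, ha, hb]
      | single w c =>
          have hc : (MonoidAlgebra.single w c : MonoidAlgebra 𝔽 (FreeMonoid (Fin d)))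
              = c • MonoidAlgebra.single w (1 : 𝔽) := by
            rw [MonoidAlgebra.smul_single, smul_eq_mul, mul_one]
          rw [hc, map_smul, map_smul, map_smul, LinearMap.smul_apply, hword]
    have := this (ψ q)
    rwa [AlgEquiv.symm_apply_apply] at this
  -- each ψ (p i) is supported in S d N
  have hfix : ∀ i, π (ψ (p i)) = ⟨ψ (p i), by
      rw [MonoidAlgebra.mem_supported]
      intro w hw
      show FreeMonoid.length w ≤ N
      refine le_trans (Finset.le_sup (f := FreeMonoid.length) hw) ?_
      rw [hN]
      exact Finset.le_sup (f := fun i => (ψ (p i)).coeff.support.sup FreeMonoid.length) (Finset.mem_univ i)⟩ := by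
    intro i
    apply Subtype.ext
    show MonoidAlgebra.ofCoeff (Finsupp.filter (· ∈ S d N) (ψ (p i)).coeff) = ψ (p i)
    ext w
    show (Finsupp.filter (· ∈ S d N) (ψ (p i)).coeff) w = (ψ (p i)).coeff w
    by_cases hw : w ∈ S d N
    · rw [Finsupp.filter_apply_pos _ _ hw]
    · rw [Finsupp.filter_apply_neg _ _ hw]
      symm
      rw [← Finsupp.notMem_support_iff]
      intro hmem
      apply hw
      show FreeMonoid.length w ≤ N
      refine le_trans (Finset.le_sup (f := FreeMonoid.length) hmem) ?_
      rw [hN]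
      exact Finset.le_sup (f := fun i => (ψ (p i)).coeff.support.sup FreeMonoid.length) (Finset.mem_univ i)
  set g : Fin m → W := fun i => FreeAlgebra.lift 𝔽 f (p i) (π 1) with hg
  have hgval : ∀ i, ((g i : W) : MonoidAlgebra 𝔽 (FreeMonoid (Fin d))) = ψ (p i) := by
    intro i
    rw [hg]
    show ((FreeAlgebra.lift 𝔽 f (p i) (π 1) : W) : MonoidAlgebra 𝔽 (FreeMonoid (Fin d))) = _
    rw [hB, hfix]
  have hgind : LinearIndependent 𝔽 g := by
    apply LinearIndependent.of_comp W.subtype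
    have : (W.subtype ∘ g) = fun i => ψ (p i) := by
      funext i; exact hgval i
    rw [this]
    exact hp.map' ψ.toLinearMap ψ.toLinearEquiv.ker
  -- transfer to matrices
  set n : ℕ := Module.finrank 𝔽 W with hn
  set b : Module.Basis (Fin n) 𝔽 W := Module.finBasis 𝔽 W with hb
  refine ⟨n, fun j => LinearMap.toMatrix b b (f j), ⇑(b.repr (π 1)), ?_⟩
  have hlift : ∀ q : FreeAlgebra 𝔽 (Fin d),
      FreeAlgebra.lift 𝔽 (fun j => LinearMap.toMatrix b b (f j)) q
        = LinearMap.toMatrix b b (FreeAlgebra.lift 𝔽 f q) := by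
    intro q
    have : FreeAlgebra.lift 𝔽 (fun j => LinearMap.toMatrix b b (f j))
        = ((LinearMap.toMatrixAlgEquiv b : Module.End 𝔽 W ≃ₐ[𝔽] Matrix (Fin n) (Fin n) 𝔽)
            : Module.End 𝔽 W →ₐ[𝔽] Matrix (Fin n) (Fin n) 𝔽).comp (FreeAlgebra.lift 𝔽 f) := by
      apply FreeAlgebra.hom_ext
      funext j
      simp only [Function.comp_apply, AlgHom.coe_comp, AlgHom.coe_coe]
      rw [FreeAlgebra.lift_ι_apply, FreeAlgebra.lift_ι_apply]
      rfl
    rw [this]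
    rfl
  have heq : (fun i : Fin m =>
      (FreeAlgebra.lift 𝔽 (fun j => LinearMap.toMatrix b b (f j)) (p i)).mulVec (⇑(b.repr (π 1))))
      = fun i => ⇑(b.repr (g i)) := by
    funext i
    rw [hlift, LinearMap.toMatrix_mulVec_repr]
  rw [heq]
  have : (fun i => ⇑(b.repr (g i)))
      = ⇑((Finsupp.linearEquivFunOnFinite 𝔽 𝔽 (Fin n)).toLinearMap.comp
          (b.repr.toLinearMap)) ∘ g := rfl
  rw [this]
  apply hgind.map'
  rw [LinearMap.ker_comp, LinearEquiv.ker, Submodule.comap_bot, LinearEquiv.ker]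

end FreeAlgLocGlobAux

/-- **Theorem 6 (local-global principle for linear dependence of free polynomials).**
For `p_1, …, p_m` in the free algebra `𝔽⟨x_1, …, x_d⟩` over a field `𝔽`, the following
are equivalent:
(1) for every `n`, all matrices `A_1, …, A_d ∈ 𝔽^{n×n}` and every vector `v ∈ 𝔽^n`, the
    vectors `p_1(A)v, …, p_m(A)v` are linearly dependent;
(2) for every `n` and all `A_1, …, A_d ∈ 𝔽^{n×n}`, the matrices `p_1(A), …, p_m(A)` are
    linearly dependent;
(3) `p_1, …, p_m` are linearly dependent. -/
theorem free_algebra_local_linear_dependence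
    (𝔽 : Type*) [Field 𝔽] (d m : ℕ) (p : Fin m → FreeAlgebra 𝔽 (Fin d)) :
    [(∀ (n : ℕ) (A : Fin d → Matrix (Fin n) (Fin n) 𝔽) (v : Fin n → 𝔽),
        ¬ LinearIndependent 𝔽
          (fun i : Fin m => (FreeAlgebra.lift 𝔽 A (p i)).mulVec v)),
      (∀ (n : ℕ) (A : Fin d → Matrix (Fin n) (Fin n) 𝔽),
        ¬ LinearIndependent 𝔽 (fun i : Fin m => FreeAlgebra.lift 𝔽 A (p i))),
      ¬ LinearIndependent 𝔽 p].TFAE := by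
  tfae_have 1 → 3 := by
    intro h1 hp
    obtain ⟨n, A, v, hind⟩ := FreeAlgLocGlobAux.exists_indep m p hp
    exact h1 n A v hind
  tfae_have 3 → 2 := by
    intro h3 n A hI
    exact h3 (LinearIndependent.of_comp (FreeAlgebra.lift 𝔽 A).toLinearMap hI)
  tfae_have 2 → 1 := by
    intro h2 n A v hI
    apply h2 n A
    exact LinearIndependent.of_comp
      ({ toFun := fun X : Matrix (Fin n) (Fin n) 𝔽 => X.mulVec v
         map_add' := fun X Y => Matrix.add_mulVec X Y v
         map_smul' := fun c X => Matrix.smul_mulVec c X v } :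
        Matrix (Fin n) (Fin n) 𝔽 →ₗ[𝔽] (Fin n → 𝔽)) hI
  tfae_finish
end

section
/- Let 𝔽 be a field and let p_1, …, p_m and q be elements of the free algebra 𝔽⟨x_1, …, x_d⟩. Then the following are equivalent: (1) for every n ∈ ℕ, every A_1, …, A_d ∈ 𝔽^{n×n}, and all vectors u, v ∈ 𝔽^n, if ⟨p_i(A_1, …, A_d)u, v⟩ = 0 for all i = 1, …, m, then ⟨q(A_1, …, A_d)u, v⟩ = 0, where ⟨·,·⟩ is the standard bilinear form ⟨a, b⟩ = ∑_j a_j b_j on 𝔽^n; (2) for every n ∈ ℕ, every A_1, …, A_d ∈ 𝔽^{n×n}, and every u ∈ 𝔽^n, the vector q(A_1, …, A_d)u lies in the 𝔽-linear span of p_1(A_1, …, A_d)u, …, p_m(A_1, …, A_d)u; (3) for every n ∈ ℕ and every A_1, …, A_d ∈ 𝔽^{n×n}, the matrix q(A_1, …, A_d) lies in the 𝔽-linear span of p_1(A_1, …, A_d), …, p_m(A_1, …, A_d); (4) q lies in the 𝔽-linear span of p_1, …, p_m in 𝔽⟨x_1, …, x_d⟩. -/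
open FreeAlgebra Matrix

noncomputable section AuxNSS

variable (𝔽 : Type*) [Field 𝔽] (d N : ℕ)

/-- Words of length at most `N` over `Fin d`. -/
abbrev NSSWrd (d N : ℕ) := {l : List (Fin d) // l.length ≤ N}

instance NSSWrd.fintype : Fintype (NSSWrd d N) := by
  apply Fintype.ofInjective (fun w : NSSWrd d N => fun k : Fin (N+1) => w.1[k.1]?)
  intro a b h
  apply Subtype.ext
  apply List.ext_getElem?
  intro n
  by_cases hn : n < N + 1
  · exact congrFun h ⟨n, hn⟩
  · rw [List.getElem?_eq_none (by have := a.2; omega), List.getElem?_eq_none (by have := b.2; omega)]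

end AuxNSS

noncomputable section Aux2
open FreeAlgebra Matrix
variable (𝔽 : Type*) [Field 𝔽] (d N : ℕ)

/-- Truncated left shift matrices. -/
def NSSshift (i : Fin d) : Matrix (NSSWrd d N) (NSSWrd d N) 𝔽 :=
  fun w w' => if w.1 = i :: w'.1 then 1 else 0

/-- Indicator of the empty word. -/
def NSSdelta : NSSWrd d N → 𝔽 := fun w => if w.1 = [] then 1 else 0

/-- Truncated coefficient map. -/
def NSScoeffs : FreeAlgebra 𝔽 (Fin d) →ₗ[𝔽] (NSSWrd d N → 𝔽) where
  toFun r := fun w => (basisFreeMonoid 𝔽 (Fin d)).repr r (FreeMonoid.ofList w.1)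
  map_add' r s := by funext w; simp
  map_smul' c r := by funext w; simp

lemma NSS_basis_eq (l : FreeMonoid (Fin d)) :
    basisFreeMonoid 𝔽 (Fin d) l = (l.toList.map (FreeAlgebra.ι 𝔽)).prod := by
  rw [basisFreeMonoid, Module.Basis.map_apply, Finsupp.coe_basisSingleOne]
  show (equivMonoidAlgebraFreeMonoid (R := 𝔽)).symm (MonoidAlgebra.single l 1) = _
  rw [equivMonoidAlgebraFreeMonoid]
  simp [AlgEquiv.ofAlgHom, MonoidAlgebra.lift_single, FreeMonoid.lift_apply]

lemma NSS_step (t : List (Fin d)) :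
    ((FreeAlgebra.lift 𝔽 (NSSshift 𝔽 d N)) ((t.map (FreeAlgebra.ι 𝔽)).prod)).mulVec
      (NSSdelta 𝔽 d N) = fun w => if w.1 = t then 1 else 0 := by
  induction t with
  | nil => rw [List.map_nil, List.prod_nil, _root_.map_one, Matrix.one_mulVec]; rfl
  | cons i t ih =>
    rw [List.map_cons, List.prod_cons, _root_.map_mul, FreeAlgebra.lift_ι_apply,
      ← Matrix.mulVec_mulVec, ih]
    funext w
    rw [show (NSSshift 𝔽 d N i *ᵥ fun w : NSSWrd d N => if w.1 = t then (1:𝔽) else 0) w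
        = ∑ w' : NSSWrd d N, (if w.1 = i :: w'.1 then (1:𝔽) else 0)
            * (if w'.1 = t then 1 else 0) from rfl]
    by_cases hw : w.1 = i :: t
    · have ht : t.length ≤ N := by have := w.2; rw [hw] at this; simp at this; omega
      rw [if_pos hw]
      refine (Finset.sum_eq_single (⟨t, ht⟩ : NSSWrd d N) ?_ ?_).trans ?_
      · intro w' _ hne
        rw [if_neg (fun hh => hne (Subtype.ext hh)), mul_zero]
      · intro h; exact absurd (Finset.mem_univ _) h
      · simp [hw]
    · rw [if_neg hw]
      apply Finset.sum_eq_zero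
      intro w' _
      rcases eq_or_ne w'.1 t with h | h
      · rw [if_neg (by rw [h]; exact hw), zero_mul]
      · rw [if_neg h, mul_zero]
end Aux2

noncomputable section Aux3
open FreeAlgebra Matrix
variable (𝔽 : Type*) [Field 𝔽] (d N : ℕ)

lemma NSS_key (r : FreeAlgebra 𝔽 (Fin d)) :
    ((FreeAlgebra.lift 𝔽 (NSSshift 𝔽 d N)) r).mulVec (NSSdelta 𝔽 d N)
      = NSScoeffs 𝔽 d N r := by
  classical
  let L : FreeAlgebra 𝔽 (Fin d) →ₗ[𝔽] (NSSWrd d N → 𝔽) :=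
    { toFun := fun r => ((FreeAlgebra.lift 𝔽 (NSSshift 𝔽 d N)) r).mulVec (NSSdelta 𝔽 d N)
      map_add' := fun r s => by rw [_root_.map_add, Matrix.add_mulVec]
      map_smul' := fun c r => by
        rw [_root_.map_smul, RingHom.id_apply, Matrix.smul_mulVec] }
  have : L = NSScoeffs 𝔽 d N := by
    apply Module.Basis.ext (basisFreeMonoid 𝔽 (Fin d))
    intro l
    show ((FreeAlgebra.lift 𝔽 (NSSshift 𝔽 d N)) (basisFreeMonoid 𝔽 (Fin d) l)).mulVec
      (NSSdelta 𝔽 d N) = NSScoeffs 𝔽 d N (basisFreeMonoid 𝔽 (Fin d) l)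
    funext w
    have h1 : ((FreeAlgebra.lift 𝔽 (NSSshift 𝔽 d N)) (basisFreeMonoid 𝔽 (Fin d) l)).mulVec
        (NSSdelta 𝔽 d N) w = if w.1 = FreeMonoid.toList l then 1 else 0 := by
      rw [NSS_basis_eq]; exact congrFun (NSS_step 𝔽 d N _) w
    rw [h1]
    show _ = (basisFreeMonoid 𝔽 (Fin d)).repr (basisFreeMonoid 𝔽 (Fin d) l)
      (FreeMonoid.ofList w.1)
    rw [Module.Basis.repr_self, Finsupp.single_apply]
    by_cases h : w.1 = FreeMonoid.toList l
    · rw [if_pos h, if_pos (show l = FreeMonoid.ofList w.1 by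
        rw [h, FreeMonoid.ofList_toList])]
    · rw [if_neg h, if_neg (fun hh => h (by rw [hh, FreeMonoid.toList_ofList]))]
  exact DFunLike.congr_fun this r

/-- Reconstruction map: from truncated coefficients back to the free algebra. -/
def NSSrecon : (NSSWrd d N → 𝔽) →ₗ[𝔽] FreeAlgebra 𝔽 (Fin d) where
  toFun v := ∑ w : NSSWrd d N, v w • basisFreeMonoid 𝔽 (Fin d) (FreeMonoid.ofList w.1)
  map_add' v v' := by simp [add_smul, Finset.sum_add_distrib]
  map_smul' c v := by simp [Finset.smul_sum, smul_smul]

lemma NSS_recon_coeffs (r : FreeAlgebra 𝔽 (Fin d))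
    (hr : ∀ w ∈ ((basisFreeMonoid 𝔽 (Fin d)).repr r).support, (FreeMonoid.toList w).length ≤ N) :
    NSSrecon 𝔽 d N (NSScoeffs 𝔽 d N r) = r := by
  classical
  set b := basisFreeMonoid 𝔽 (Fin d)
  have himg : NSSrecon 𝔽 d N (NSScoeffs 𝔽 d N r)
      = ∑ w ∈ Finset.univ.image (fun w : NSSWrd d N => FreeMonoid.ofList w.1),
          b.repr r w • b w := by
    rw [Finset.sum_image (fun a _ c _ h => Subtype.ext
      (by simpa using congrArg FreeMonoid.toList h))]
    rfl
  have hr2 : (Finsupp.linearCombination 𝔽 b) (b.repr r)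
      = ∑ w ∈ Finset.univ.image (fun w : NSSWrd d N => FreeMonoid.ofList w.1),
          b.repr r w • b w := by
    rw [Finsupp.linearCombination_apply, Finsupp.sum]
    apply Finset.sum_subset
    · intro w hw
      exact Finset.mem_image.2 ⟨⟨FreeMonoid.toList w, hr w hw⟩, Finset.mem_univ _, by simp⟩
    · intro w _ hw
      rw [Finsupp.notMem_support_iff.1 hw, zero_smul]
  rw [himg, ← hr2, Module.Basis.linearCombination_repr]

end Aux3

open FreeAlgebra Matrix in
theorem NSS_two_four (𝔽 : Type*) [Field 𝔽] (d m : ℕ)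
    (p : Fin m → FreeAlgebra 𝔽 (Fin d)) (q : FreeAlgebra 𝔽 (Fin d))
    (h2 : ∀ (n : ℕ) (A : Fin d → Matrix (Fin n) (Fin n) 𝔽) (u : Fin n → 𝔽),
        (FreeAlgebra.lift 𝔽 A q).mulVec u ∈
          Submodule.span 𝔽
            (Set.range fun i : Fin m => (FreeAlgebra.lift 𝔽 A (p i)).mulVec u)) :
    q ∈ Submodule.span 𝔽 (Set.range p) := by
  letI : DecidableEq (FreeMonoid (Fin d)) := inferInstanceAs (DecidableEq (List (Fin d)))
  set b := basisFreeMonoid 𝔽 (Fin d) with hb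
  set N : ℕ := ((b.repr q).support ∪ Finset.univ.biUnion fun i => (b.repr (p i)).support).sup
      (fun w => (FreeMonoid.toList w).length) with hN
  have hsuppq : ∀ w ∈ (b.repr q).support, (FreeMonoid.toList w).length ≤ N := fun w hw =>
    Finset.le_sup (Finset.mem_union_left _ hw)
  have hsuppp : ∀ i, ∀ w ∈ (b.repr (p i)).support, (FreeMonoid.toList w).length ≤ N :=
    fun i w hw => Finset.le_sup
      (Finset.mem_union_right _ (Finset.mem_biUnion.2 ⟨i, Finset.mem_univ _, hw⟩))
  set n := Fintype.card (NSSWrd d N) with hn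
  set e : Fin n ≃ NSSWrd d N := (Fintype.equivFin (NSSWrd d N)).symm with he
  set B : Fin d → Matrix (Fin n) (Fin n) 𝔽 := fun i => (NSSshift 𝔽 d N i).submatrix e e with hB
  have hlift : ∀ r, FreeAlgebra.lift 𝔽 B r
      = ((FreeAlgebra.lift 𝔽 (NSSshift 𝔽 d N)) r).submatrix e e := by
    have hcomp : FreeAlgebra.lift 𝔽 B = ((Matrix.reindexAlgEquiv 𝔽 𝔽 e.symm).toAlgHom.comp
        (FreeAlgebra.lift 𝔽 (NSSshift 𝔽 d N))) := by
      apply FreeAlgebra.hom_ext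
      funext i
      simp [hB, Matrix.reindexAlgEquiv_apply, Matrix.reindex_apply]
    intro r
    rw [hcomp]
    simp [Matrix.reindexAlgEquiv_apply, Matrix.reindex_apply]
  have hmv : ∀ r, (FreeAlgebra.lift 𝔽 B r).mulVec (NSSdelta 𝔽 d N ∘ e)
      = NSScoeffs 𝔽 d N r ∘ e := by
    intro r
    rw [hlift, Matrix.submatrix_mulVec_equiv,
      show (NSSdelta 𝔽 d N ∘ ⇑e) ∘ ⇑e.symm = NSSdelta 𝔽 d N from funext fun w => by simp,
      NSS_key]
  have h := h2 n B (NSSdelta 𝔽 d N ∘ e)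
  rw [hmv] at h
  rw [show (fun i : Fin m => (FreeAlgebra.lift 𝔽 B (p i)).mulVec (NSSdelta 𝔽 d N ∘ ⇑e))
      = fun i => NSScoeffs 𝔽 d N (p i) ∘ ⇑e from funext fun i => hmv (p i)] at h
  set T := LinearEquiv.funCongrLeft 𝔽 𝔽 e with hT
  rw [show (fun i : Fin m => NSScoeffs 𝔽 d N (p i) ∘ ⇑e)
      = ⇑T ∘ (fun i => NSScoeffs 𝔽 d N (p i)) from rfl, Set.range_comp] at h
  have hΦ : NSScoeffs 𝔽 d N q ∈
      Submodule.span 𝔽 (Set.range fun i => NSScoeffs 𝔽 d N (p i)) :=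
    (Submodule.apply_mem_span_image_iff_mem_span T.injective).mp h
  have h4 := Submodule.mem_map_of_mem (f := NSSrecon 𝔽 d N) hΦ
  rw [Submodule.map_span, ← Set.range_comp] at h4
  rwa [NSS_recon_coeffs 𝔽 d N q hsuppq,
    show (⇑(NSSrecon 𝔽 d N) ∘ fun i => NSScoeffs 𝔽 d N (p i)) = p
      from funext fun i => NSS_recon_coeffs 𝔽 d N (p i) (hsuppp i)] at h4



/-- **Corollary 2 (a weak nullstellensatz for free polynomials).**
For `p_1, …, p_m, q` in the free algebra `𝔽⟨x_1, …, x_d⟩` over a field `𝔽`, the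
following are equivalent:
(1) for every `n`, all `A_1, …, A_d ∈ 𝔽^{n×n}` and all `u, v ∈ 𝔽^n`, if
    `⟨p_i(A)u, v⟩ = 0` for all `i` then `⟨q(A)u, v⟩ = 0`, where `⟨a, b⟩ = ∑_j a_j b_j`;
(2) for every `n`, all `A_1, …, A_d ∈ 𝔽^{n×n}` and every `u ∈ 𝔽^n`,
    `q(A)u ∈ Lin{p_1(A)u, …, p_m(A)u}`;
(3) for every `n` and all `A_1, …, A_d ∈ 𝔽^{n×n}`,
    `q(A) ∈ Lin{p_1(A), …, p_m(A)}`;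
(4) `q ∈ Lin{p_1, …, p_m}`. -/
theorem free_algebra_weak_nullstellensatz
    (𝔽 : Type*) [Field 𝔽] (d m : ℕ)
    (p : Fin m → FreeAlgebra 𝔽 (Fin d)) (q : FreeAlgebra 𝔽 (Fin d)) :
    [(∀ (n : ℕ) (A : Fin d → Matrix (Fin n) (Fin n) 𝔽) (u v : Fin n → 𝔽),
        (∀ i : Fin m,
          dotProduct ((FreeAlgebra.lift 𝔽 A (p i)).mulVec u) v = 0) →
        dotProduct ((FreeAlgebra.lift 𝔽 A q).mulVec u) v = 0),
      (∀ (n : ℕ) (A : Fin d → Matrix (Fin n) (Fin n) 𝔽) (u : Fin n → 𝔽),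
        (FreeAlgebra.lift 𝔽 A q).mulVec u ∈
          Submodule.span 𝔽
            (Set.range fun i : Fin m => (FreeAlgebra.lift 𝔽 A (p i)).mulVec u)),
      (∀ (n : ℕ) (A : Fin d → Matrix (Fin n) (Fin n) 𝔽),
        FreeAlgebra.lift 𝔽 A q ∈
          Submodule.span 𝔽
            (Set.range fun i : Fin m => FreeAlgebra.lift 𝔽 A (p i))),
      q ∈ Submodule.span 𝔽 (Set.range p)].TFAE := by
  tfae_have 4 → 3 := by
    intro h4 n A
    have := Submodule.mem_map_of_mem (f := (FreeAlgebra.lift 𝔽 A).toLinearMap) h4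
    rwa [Submodule.map_span, ← Set.range_comp] at this
  tfae_have 3 → 2 := by
    intro h3 n A u
    let f : Matrix (Fin n) (Fin n) 𝔽 →ₗ[𝔽] (Fin n → 𝔽) :=
      { toFun := fun M => M.mulVec u
        map_add' := fun M M' => Matrix.add_mulVec M M' u
        map_smul' := fun c M => by
          rw [RingHom.id_apply, Matrix.smul_mulVec] }
    have := Submodule.mem_map_of_mem (f := f) (h3 n A)
    rwa [Submodule.map_span, ← Set.range_comp] at this
  tfae_have 2 → 1 := by
    intro h2 n A u v hpv
    let f : (Fin n → 𝔽) →ₗ[𝔽] 𝔽 :=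
      { toFun := fun x => dotProduct x v
        map_add' := fun x y => add_dotProduct x y v
        map_smul' := fun c x => by
          rw [RingHom.id_apply, smul_dotProduct] }
    have hker : Submodule.span 𝔽
        (Set.range fun i : Fin m => (FreeAlgebra.lift 𝔽 A (p i)).mulVec u)
        ≤ LinearMap.ker f := by
      rw [Submodule.span_le]
      rintro _ ⟨i, rfl⟩
      exact hpv i
    exact hker (h2 n A u)
  tfae_have 1 → 2 := by
    intro h1 n A u
    set S := Submodule.span 𝔽
      (Set.range fun i : Fin m => (FreeAlgebra.lift 𝔽 A (p i)).mulVec u) with hS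
    have hall : ∀ φ : Module.Dual 𝔽 ((Fin n → 𝔽) ⧸ S),
        φ (Submodule.Quotient.mk ((FreeAlgebra.lift 𝔽 A q).mulVec u)) = 0 := by
      intro φ
      set f := φ.comp S.mkQ with hf
      set v : Fin n → 𝔽 := fun j => f (fun k => if j = k then 1 else 0) with hv
      have hfd : ∀ x : Fin n → 𝔽, dotProduct x v = f x := by
        intro x
        rw [LinearMap.pi_apply_eq_sum_univ f x]
        simp [dotProduct, hv, smul_eq_mul]
      have h0 : ∀ i, dotProduct ((FreeAlgebra.lift 𝔽 A (p i)).mulVec u) v = 0 := by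
        intro i
        rw [hfd, hf, LinearMap.comp_apply, Submodule.mkQ_apply,
          (Submodule.Quotient.mk_eq_zero S).2 (Submodule.subset_span ⟨i, rfl⟩), map_zero]
      have hq := h1 n A u v h0
      rw [hfd, hf, LinearMap.comp_apply, Submodule.mkQ_apply] at hq
      exact hq
    have hz := (Module.forall_dual_apply_eq_zero_iff 𝔽 _).1 hall
    rwa [Submodule.Quotient.mk_eq_zero] at hz
  tfae_have 2 → 4 := NSS_two_four 𝔽 d m p q
  tfae_finish
end
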